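/- arXiv:1503.00091 — 4 statements merged into one kernel-verified Lean document; each statement's English description precedes it below -/
import Mathlib

section
/- Let G be a (P₆, house, hole, domino)-free graph with efficient dominating set D, and suppose G² contains an induced C_k (k ≥ 4) with real vertices v₁,...,v_k (consecutive ones at G-distance 2) and auxiliary vertices x₁,...,x_k. Then D is disjoint from {v₁,...,v_k, x₁,...,x_k}. -/
open SimpleGraph Finset

variable {V : Type*}

/-- The square of a graph `G`: two distinct vertices are adjacent iff
their distance in `G` is 1 or 2. -/
def square (G : SimpleGraph V) : SimpleGraph V where
  Adj u v := u ≠ v ∧ (G.Adj u v ∨ ∃ w, G.Adj u w ∧ G.Adj w v)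
  symm := by
    constructor
    rintro u v ⟨h, h2 | ⟨w, hw1, hw2⟩⟩
    · exact ⟨h.symm, Or.inl h2.symm⟩
    · exact ⟨h.symm, Or.inr ⟨w, hw2.symm, hw1.symm⟩⟩
  loopless := by constructor; rintro u ⟨h, _⟩; exact h rfl

/-- `D` is an efficient dominating set of `G`: every vertex is dominated
(by closed neighborhoods) by exactly one vertex of `D`. -/
def IsEDS (G : SimpleGraph V) (D : Set V) : Prop :=
  ∀ v : V, ∃! d : V, d ∈ D ∧ (d = v ∨ G.Adj d v)

/-- `G` has no induced subgraph isomorphic to `H`. -/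
def Free {W : Type*} (G : SimpleGraph V) (H : SimpleGraph W) : Prop :=
  IsEmpty (H ↪g G)

/-- The house: the complement of the path on five vertices. -/
def house : SimpleGraph (Fin 5) := (pathGraph 5)ᶜ

/-- The domino: a `P₅` `x₁ … x₅` together with a vertex adjacent to `x₁, x₃, x₅`. -/
def domino : SimpleGraph (Fin 6) :=
  SimpleGraph.fromRel (fun i j =>
    (i, j) ∈ [((0 : Fin 6), (1 : Fin 6)), (1, 2), (2, 3), (3, 4), (5, 0), (5, 2), (5, 4)])

/-- A graph is hole-free if it contains no induced cycle `C_k`, `k ≥ 5`. -/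
def HoleFree (G : SimpleGraph V) : Prop := ∀ k, 5 ≤ k → _root_.Free G (cycleGraph k)

/-- A graph is chordal if it contains no induced cycle `C_k`, `k ≥ 4`. -/
def Chordal (G : SimpleGraph V) : Prop := ∀ k, 4 ≤ k → _root_.Free G (cycleGraph k)


lemma embed_of {n : ℕ} (G : SimpleGraph V) (H : SimpleGraph (Fin n)) (f : Fin n → V)
    (h1 : ∀ a b : Fin n, H.Adj a b → G.Adj (f a) (f b))
    (h2 : ∀ a b : Fin n, a ≠ b → ¬H.Adj a b → f a ≠ f b ∧ ¬G.Adj (f a) (f b)) :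
    Nonempty (H ↪g G) := by
  refine ⟨⟨⟨f, ?_⟩, ?_⟩⟩
  · intro a b hfab
    by_contra hab
    by_cases h : H.Adj a b
    · exact (h1 a b h).ne hfab
    · exact (h2 a b hab h).1 hfab
  · intro a b
    constructor
    · intro hG
      by_contra h
      rcases eq_or_ne a b with rfl | hab
      · exact G.loopless.irrefl _ hG
      · exact (h2 a b hab h).2 hG
    · exact h1 a b

lemma house_adj {a b : Fin 5} : house.Adj a b ↔ a ≠ b ∧ ¬(a.val+1 = b.val ∨ b.val+1 = a.val) := by
  rw [house, compl_adj, pathGraph_adj]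

lemma p6_contra (G : SimpleGraph V) (hfree : IsEmpty (pathGraph 6 ↪g G)) (a b c d e f : V)
    (e1 : G.Adj a b)
    (e2 : G.Adj b c)
    (e3 : G.Adj c d)
    (e4 : G.Adj d e)
    (e5 : G.Adj e f)
    (n13 : a ≠ c ∧ ¬G.Adj a c)
    (n14 : a ≠ d ∧ ¬G.Adj a d)
    (n15 : a ≠ e ∧ ¬G.Adj a e)
    (n16 : a ≠ f ∧ ¬G.Adj a f)
    (n24 : b ≠ d ∧ ¬G.Adj b d)
    (n25 : b ≠ e ∧ ¬G.Adj b e)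
    (n26 : b ≠ f ∧ ¬G.Adj b f)
    (n35 : c ≠ e ∧ ¬G.Adj c e)
    (n36 : c ≠ f ∧ ¬G.Adj c f)
    (n46 : d ≠ f ∧ ¬G.Adj d f)
    : False := by
  apply hfree.false
  refine (embed_of G _ ![a, b, c, d, e, f] ?_ ?_).some
  · intro p q hpq
    rw [pathGraph_adj] at hpq
    fin_cases p <;> fin_cases q <;>
      first
        | exact absurd hpq (of_decide_eq_false rfl)
        | exact (hpq (of_decide_eq_true rfl)).elim
        | exact absurd rfl hne
        | exact e1
        | exact e1.symm
        | exact e2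
        | exact e2.symm
        | exact e3
        | exact e3.symm
        | exact e4
        | exact e4.symm
        | exact e5
        | exact e5.symm
        | exact ⟨n13.1, n13.2⟩
        | exact ⟨n13.1.symm, fun h => n13.2 h.symm⟩
        | exact ⟨n14.1, n14.2⟩
        | exact ⟨n14.1.symm, fun h => n14.2 h.symm⟩
        | exact ⟨n15.1, n15.2⟩
        | exact ⟨n15.1.symm, fun h => n15.2 h.symm⟩
        | exact ⟨n16.1, n16.2⟩
        | exact ⟨n16.1.symm, fun h => n16.2 h.symm⟩
        | exact ⟨n24.1, n24.2⟩
        | exact ⟨n24.1.symm, fun h => n24.2 h.symm⟩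
        | exact ⟨n25.1, n25.2⟩
        | exact ⟨n25.1.symm, fun h => n25.2 h.symm⟩
        | exact ⟨n26.1, n26.2⟩
        | exact ⟨n26.1.symm, fun h => n26.2 h.symm⟩
        | exact ⟨n35.1, n35.2⟩
        | exact ⟨n35.1.symm, fun h => n35.2 h.symm⟩
        | exact ⟨n36.1, n36.2⟩
        | exact ⟨n36.1.symm, fun h => n36.2 h.symm⟩
        | exact ⟨n46.1, n46.2⟩
        | exact ⟨n46.1.symm, fun h => n46.2 h.symm⟩
  · intro p q hne hpq
    rw [pathGraph_adj] at hpq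
    fin_cases p <;> fin_cases q <;>
      first
        | exact absurd hpq (of_decide_eq_false rfl)
        | exact (hpq (of_decide_eq_true rfl)).elim
        | exact absurd rfl hne
        | exact e1
        | exact e1.symm
        | exact e2
        | exact e2.symm
        | exact e3
        | exact e3.symm
        | exact e4
        | exact e4.symm
        | exact e5
        | exact e5.symm
        | exact ⟨n13.1, n13.2⟩
        | exact ⟨n13.1.symm, fun h => n13.2 h.symm⟩
        | exact ⟨n14.1, n14.2⟩
        | exact ⟨n14.1.symm, fun h => n14.2 h.symm⟩
        | exact ⟨n15.1, n15.2⟩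
        | exact ⟨n15.1.symm, fun h => n15.2 h.symm⟩
        | exact ⟨n16.1, n16.2⟩
        | exact ⟨n16.1.symm, fun h => n16.2 h.symm⟩
        | exact ⟨n24.1, n24.2⟩
        | exact ⟨n24.1.symm, fun h => n24.2 h.symm⟩
        | exact ⟨n25.1, n25.2⟩
        | exact ⟨n25.1.symm, fun h => n25.2 h.symm⟩
        | exact ⟨n26.1, n26.2⟩
        | exact ⟨n26.1.symm, fun h => n26.2 h.symm⟩
        | exact ⟨n35.1, n35.2⟩
        | exact ⟨n35.1.symm, fun h => n35.2 h.symm⟩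
        | exact ⟨n36.1, n36.2⟩
        | exact ⟨n36.1.symm, fun h => n36.2 h.symm⟩
        | exact ⟨n46.1, n46.2⟩
        | exact ⟨n46.1.symm, fun h => n46.2 h.symm⟩

lemma c5_contra (G : SimpleGraph V) (hfree : IsEmpty (cycleGraph 5 ↪g G)) (a b c d e : V)
    (e1 : G.Adj a b)
    (e2 : G.Adj b c)
    (e3 : G.Adj c d)
    (e4 : G.Adj d e)
    (e5 : G.Adj e a)
    (n13 : a ≠ c ∧ ¬G.Adj a c)
    (n14 : a ≠ d ∧ ¬G.Adj a d)
    (n24 : b ≠ d ∧ ¬G.Adj b d)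
    (n25 : b ≠ e ∧ ¬G.Adj b e)
    (n35 : c ≠ e ∧ ¬G.Adj c e)
    : False := by
  apply hfree.false
  refine (embed_of G _ ![a, b, c, d, e] ?_ ?_).some
  · intro p q hpq
    rw [cycleGraph_adj] at hpq
    fin_cases p <;> fin_cases q <;>
      first
        | exact absurd hpq (of_decide_eq_false rfl)
        | exact (hpq (of_decide_eq_true rfl)).elim
        | exact absurd rfl hne
        | exact e1
        | exact e1.symm
        | exact e2
        | exact e2.symm
        | exact e3
        | exact e3.symm
        | exact e4
        | exact e4.symm
        | exact e5
        | exact e5.symm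
        | exact ⟨n13.1, n13.2⟩
        | exact ⟨n13.1.symm, fun h => n13.2 h.symm⟩
        | exact ⟨n14.1, n14.2⟩
        | exact ⟨n14.1.symm, fun h => n14.2 h.symm⟩
        | exact ⟨n24.1, n24.2⟩
        | exact ⟨n24.1.symm, fun h => n24.2 h.symm⟩
        | exact ⟨n25.1, n25.2⟩
        | exact ⟨n25.1.symm, fun h => n25.2 h.symm⟩
        | exact ⟨n35.1, n35.2⟩
        | exact ⟨n35.1.symm, fun h => n35.2 h.symm⟩
  · intro p q hne hpq
    rw [cycleGraph_adj] at hpq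
    fin_cases p <;> fin_cases q <;>
      first
        | exact absurd hpq (of_decide_eq_false rfl)
        | exact (hpq (of_decide_eq_true rfl)).elim
        | exact absurd rfl hne
        | exact e1
        | exact e1.symm
        | exact e2
        | exact e2.symm
        | exact e3
        | exact e3.symm
        | exact e4
        | exact e4.symm
        | exact e5
        | exact e5.symm
        | exact ⟨n13.1, n13.2⟩
        | exact ⟨n13.1.symm, fun h => n13.2 h.symm⟩
        | exact ⟨n14.1, n14.2⟩
        | exact ⟨n14.1.symm, fun h => n14.2 h.symm⟩
        | exact ⟨n24.1, n24.2⟩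
        | exact ⟨n24.1.symm, fun h => n24.2 h.symm⟩
        | exact ⟨n25.1, n25.2⟩
        | exact ⟨n25.1.symm, fun h => n25.2 h.symm⟩
        | exact ⟨n35.1, n35.2⟩
        | exact ⟨n35.1.symm, fun h => n35.2 h.symm⟩

lemma c6_contra (G : SimpleGraph V) (hfree : IsEmpty (cycleGraph 6 ↪g G)) (a b c d e f : V)
    (e1 : G.Adj a b)
    (e2 : G.Adj b c)
    (e3 : G.Adj c d)
    (e4 : G.Adj d e)
    (e5 : G.Adj e f)
    (e6 : G.Adj f a)
    (n13 : a ≠ c ∧ ¬G.Adj a c)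
    (n14 : a ≠ d ∧ ¬G.Adj a d)
    (n15 : a ≠ e ∧ ¬G.Adj a e)
    (n24 : b ≠ d ∧ ¬G.Adj b d)
    (n25 : b ≠ e ∧ ¬G.Adj b e)
    (n26 : b ≠ f ∧ ¬G.Adj b f)
    (n35 : c ≠ e ∧ ¬G.Adj c e)
    (n36 : c ≠ f ∧ ¬G.Adj c f)
    (n46 : d ≠ f ∧ ¬G.Adj d f)
    : False := by
  apply hfree.false
  refine (embed_of G _ ![a, b, c, d, e, f] ?_ ?_).some
  · intro p q hpq
    rw [cycleGraph_adj] at hpq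
    fin_cases p <;> fin_cases q <;>
      first
        | exact absurd hpq (of_decide_eq_false rfl)
        | exact (hpq (of_decide_eq_true rfl)).elim
        | exact absurd rfl hne
        | exact e1
        | exact e1.symm
        | exact e2
        | exact e2.symm
        | exact e3
        | exact e3.symm
        | exact e4
        | exact e4.symm
        | exact e5
        | exact e5.symm
        | exact e6
        | exact e6.symm
        | exact ⟨n13.1, n13.2⟩
        | exact ⟨n13.1.symm, fun h => n13.2 h.symm⟩
        | exact ⟨n14.1, n14.2⟩
        | exact ⟨n14.1.symm, fun h => n14.2 h.symm⟩
        | exact ⟨n15.1, n15.2⟩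
        | exact ⟨n15.1.symm, fun h => n15.2 h.symm⟩
        | exact ⟨n24.1, n24.2⟩
        | exact ⟨n24.1.symm, fun h => n24.2 h.symm⟩
        | exact ⟨n25.1, n25.2⟩
        | exact ⟨n25.1.symm, fun h => n25.2 h.symm⟩
        | exact ⟨n26.1, n26.2⟩
        | exact ⟨n26.1.symm, fun h => n26.2 h.symm⟩
        | exact ⟨n35.1, n35.2⟩
        | exact ⟨n35.1.symm, fun h => n35.2 h.symm⟩
        | exact ⟨n36.1, n36.2⟩
        | exact ⟨n36.1.symm, fun h => n36.2 h.symm⟩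
        | exact ⟨n46.1, n46.2⟩
        | exact ⟨n46.1.symm, fun h => n46.2 h.symm⟩
  · intro p q hne hpq
    rw [cycleGraph_adj] at hpq
    fin_cases p <;> fin_cases q <;>
      first
        | exact absurd hpq (of_decide_eq_false rfl)
        | exact (hpq (of_decide_eq_true rfl)).elim
        | exact absurd rfl hne
        | exact e1
        | exact e1.symm
        | exact e2
        | exact e2.symm
        | exact e3
        | exact e3.symm
        | exact e4
        | exact e4.symm
        | exact e5
        | exact e5.symm
        | exact e6
        | exact e6.symm
        | exact ⟨n13.1, n13.2⟩
        | exact ⟨n13.1.symm, fun h => n13.2 h.symm⟩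
        | exact ⟨n14.1, n14.2⟩
        | exact ⟨n14.1.symm, fun h => n14.2 h.symm⟩
        | exact ⟨n15.1, n15.2⟩
        | exact ⟨n15.1.symm, fun h => n15.2 h.symm⟩
        | exact ⟨n24.1, n24.2⟩
        | exact ⟨n24.1.symm, fun h => n24.2 h.symm⟩
        | exact ⟨n25.1, n25.2⟩
        | exact ⟨n25.1.symm, fun h => n25.2 h.symm⟩
        | exact ⟨n26.1, n26.2⟩
        | exact ⟨n26.1.symm, fun h => n26.2 h.symm⟩
        | exact ⟨n35.1, n35.2⟩
        | exact ⟨n35.1.symm, fun h => n35.2 h.symm⟩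
        | exact ⟨n36.1, n36.2⟩
        | exact ⟨n36.1.symm, fun h => n36.2 h.symm⟩
        | exact ⟨n46.1, n46.2⟩
        | exact ⟨n46.1.symm, fun h => n46.2 h.symm⟩

lemma house_contra (G : SimpleGraph V) (hfree : IsEmpty (house ↪g G)) (p q r s u : V)
    (e1 : G.Adj p q)
    (e2 : G.Adj q r)
    (e3 : G.Adj r s)
    (e4 : G.Adj s p)
    (e5 : G.Adj u q)
    (e6 : G.Adj u r)
    (n13 : p ≠ r ∧ ¬G.Adj p r)
    (n24 : q ≠ s ∧ ¬G.Adj q s)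
    (n51 : u ≠ p ∧ ¬G.Adj u p)
    (n54 : u ≠ s ∧ ¬G.Adj u s)
    : False := by
  apply hfree.false
  refine (embed_of G _ ![r, p, u, s, q] ?_ ?_).some
  · intro p q hpq
    rw [house_adj] at hpq
    fin_cases p <;> fin_cases q <;>
      first
        | exact absurd hpq (of_decide_eq_false rfl)
        | exact (hpq (of_decide_eq_true rfl)).elim
        | exact absurd rfl hne
        | exact e1
        | exact e1.symm
        | exact e2
        | exact e2.symm
        | exact e3
        | exact e3.symm
        | exact e4
        | exact e4.symm
        | exact e5
        | exact e5.symm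
        | exact e6
        | exact e6.symm
        | exact ⟨n13.1, n13.2⟩
        | exact ⟨n13.1.symm, fun h => n13.2 h.symm⟩
        | exact ⟨n24.1, n24.2⟩
        | exact ⟨n24.1.symm, fun h => n24.2 h.symm⟩
        | exact ⟨n51.1, n51.2⟩
        | exact ⟨n51.1.symm, fun h => n51.2 h.symm⟩
        | exact ⟨n54.1, n54.2⟩
        | exact ⟨n54.1.symm, fun h => n54.2 h.symm⟩
  · intro p q hne hpq
    rw [house_adj] at hpq
    fin_cases p <;> fin_cases q <;>
      first
        | exact absurd hpq (of_decide_eq_false rfl)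
        | exact (hpq (of_decide_eq_true rfl)).elim
        | exact absurd rfl hne
        | exact e1
        | exact e1.symm
        | exact e2
        | exact e2.symm
        | exact e3
        | exact e3.symm
        | exact e4
        | exact e4.symm
        | exact e5
        | exact e5.symm
        | exact e6
        | exact e6.symm
        | exact ⟨n13.1, n13.2⟩
        | exact ⟨n13.1.symm, fun h => n13.2 h.symm⟩
        | exact ⟨n24.1, n24.2⟩
        | exact ⟨n24.1.symm, fun h => n24.2 h.symm⟩
        | exact ⟨n51.1, n51.2⟩
        | exact ⟨n51.1.symm, fun h => n51.2 h.symm⟩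
        | exact ⟨n54.1, n54.2⟩
        | exact ⟨n54.1.symm, fun h => n54.2 h.symm⟩


theorem stmt5 (G : SimpleGraph V) (h6 : _root_.Free G (pathGraph 6)) (hH : _root_.Free G house)
    (hhole : HoleFree G) (hdom : _root_.Free G domino)
    (D : Set V) (hED : IsEDS G D)
    (k : ℕ) (hk : 4 ≤ k) (v : ZMod k → V) (hinj : Function.Injective v)
    (hadj : ∀ i : ZMod k, (square G).Adj (v i) (v (i + 1)))
    (hnon : ∀ i j : ZMod k, j ≠ i - 1 → j ≠ i → j ≠ i + 1 → ¬ (square G).Adj (v i) (v j))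
    (x : ZMod k → V) (hd2 : ∀ i : ZMod k, G.dist (v i) (v (i + 1)) = 2)
    (hx : ∀ i : ZMod k, G.Adj (v i) (x i) ∧ G.Adj (x i) (v (i + 1))) :
    ∀ i : ZMod k, v i ∉ D ∧ x i ∉ D := by
  have hz : ∀ m : ℕ, 0 < m → m < 4 → ((m : ZMod k) ≠ 0) := by
    intro m hm0 hm4 h
    have hdvd : k ∣ m := (ZMod.natCast_eq_zero_iff _ _).mp h
    have := Nat.le_of_dvd hm0 hdvd
    omega
  have hz1 : (1 : ZMod k) ≠ 0 := by have := hz 1 (by norm_num) (by norm_num); simpa using this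
  have hz2 : (2 : ZMod k) ≠ 0 := by have := hz 2 (by norm_num) (by norm_num); simpa using this
  have hz3 : (3 : ZMod k) ≠ 0 := by have := hz 3 (by norm_num) (by norm_num); simpa using this
  have key : ∀ p q : ZMod k, q ≠ p - 1 → q ≠ p → q ≠ p + 1 →
      v p ≠ v q ∧ ¬G.Adj (v p) (v q) ∧ ∀ w, ¬(G.Adj (v p) w ∧ G.Adj w (v q)) := by
    intro p q hq1 hq2 hq3
    have hne : v p ≠ v q := fun h => hq2 (hinj h).symm
    have hns := hnon p q hq1 hq2 hq3
    have hmain : ¬(G.Adj (v p) (v q) ∨ ∃ w, G.Adj (v p) w ∧ G.Adj w (v q)) :=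
      fun hor => hns ⟨hne, hor⟩
    exact ⟨hne, fun ha => hmain (Or.inl ha), fun w hw => hmain (Or.inr ⟨w, hw⟩)⟩
  have excl : ∀ z w : V, w ∈ D → (w = z ∨ G.Adj w z) → ∀ u, u ∈ D → u ≠ w →
      u ≠ z ∧ ¬G.Adj u z := by
    intro z w hwD hwz u huD huw
    obtain ⟨d0, _, hun⟩ := hED z
    have hw := hun w ⟨hwD, hwz⟩
    constructor
    · rintro rfl
      exact huw ((hun u ⟨huD, Or.inl rfl⟩).trans hw.symm)
    · intro hadj'
      exact huw ((hun u ⟨huD, Or.inr hadj'⟩).trans hw.symm)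
  have dist_facts : ∀ j : ZMod k, v j ≠ v (j + 1) ∧ ¬G.Adj (v j) (v (j + 1)) := by
    intro j
    have h := hd2 j
    constructor
    · intro he; rw [he, SimpleGraph.dist_self] at h; exact two_ne_zero h.symm
    · intro ha; rw [SimpleGraph.dist_eq_one_iff_adj.mpr ha] at h; norm_num at h
  -- Step 1 : no real cycle vertex is in D
  have hvD : ∀ j : ZMod k, v j ∉ D := by
    intro i hvi
    have em1 : i - 1 + 1 = i := by ring
    have hx0 := hx (i - 1); rw [em1] at hx0
    have hx1 := hx i
    obtain ⟨S1ne, S1na, S1w⟩ := key (i + 1) (i - 1)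
      (by intro h; apply hz1; linear_combination -h)
      (by intro h; apply hz2; linear_combination -h)
      (by intro h; apply hz3; linear_combination -h)
    have d01 := dist_facts (i - 1); rw [em1] at d01
    have d12 := dist_facts i
    obtain ⟨d, ⟨hdD, hdv⟩, hdu⟩ := hED (v (i + 1))
    have hdne1 : d ≠ v i := by
      rintro rfl
      rcases hdv with h | h
      · exact d12.1 h
      · exact d12.2 h
    have hv2nD : v (i + 1) ∉ D := by
      intro h2
      obtain ⟨w, _, hwu⟩ := hED (x i)
      have e1 : v i = w := hwu _ ⟨hvi, Or.inr hx1.1⟩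
      have e2 : v (i + 1) = w := hwu _ ⟨h2, Or.inr hx1.2.symm⟩
      exact d12.1 (e1.trans e2.symm)
    have hdv2 : G.Adj d (v (i + 1)) := by
      rcases hdv with h | h
      · exact absurd (h ▸ hdD) hv2nD
      · exact h
    have hdvi := excl (v i) (v i) hvi (Or.inl rfl) d hdD hdne1
    have hdxi := excl (x i) (v i) hvi (Or.inr hx1.1) d hdD hdne1
    have hdx0 := excl (x (i - 1)) (v i) hvi (Or.inr hx0.2.symm) d hdD hdne1
    have hdvm : d ≠ v (i - 1) ∧ ¬G.Adj d (v (i - 1)) := by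
      constructor
      · rintro rfl; exact S1na hdv2.symm
      · intro h; exact S1w d ⟨hdv2.symm, h⟩
    have hx0v2 : x (i - 1) ≠ v (i + 1) ∧ ¬G.Adj (x (i - 1)) (v (i + 1)) := by
      constructor
      · intro h; exact S1na (h ▸ hx0.1).symm
      · intro h; exact S1w _ ⟨h.symm, hx0.1.symm⟩
    have hvmxi : v (i - 1) ≠ x i ∧ ¬G.Adj (v (i - 1)) (x i) := by
      constructor
      · intro h; exact S1na (h ▸ hx1.2).symm
      · intro h; exact S1w _ ⟨hx1.2.symm, h.symm⟩
    have ne01 : x (i - 1) ≠ x i := by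
      intro h; exact hvmxi.2 (h ▸ hx0.1)
    by_cases hA : G.Adj (x (i - 1)) (x i)
    · -- P6 : d', v(i-1), x(i-1), x i, v(i+1), d
      obtain ⟨d', ⟨hd'D, hd'v⟩, _⟩ := hED (v (i - 1))
      have hvmnD : v (i - 1) ∉ D := by
        intro h
        obtain ⟨w, _, hwu⟩ := hED (x (i - 1))
        have e1 : v (i - 1) = w := hwu _ ⟨h, Or.inr hx0.1⟩
        have e2 : v i = w := hwu _ ⟨hvi, Or.inr hx0.2.symm⟩
        exact d01.1 (e1.trans e2.symm)
      have hd'vm : G.Adj d' (v (i - 1)) := by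
        rcases hd'v with h | h
        · exact absurd (h ▸ hd'D) hvmnD
        · exact h
      have hd'ne : d' ≠ v i := by
        rintro rfl; exact d01.2 hd'vm.symm
      have hd'xi := excl (x i) (v i) hvi (Or.inr hx1.1) d' hd'D hd'ne
      have hd'x0 := excl (x (i - 1)) (v i) hvi (Or.inr hx0.2.symm) d' hd'D hd'ne
      have hd'd_ne : d' ≠ d := by
        rintro rfl; exact hdvm.2 hd'vm
      have hd'v2 := excl (v (i + 1)) d hdD hdv d' hd'D hd'd_ne
      have hd'd := excl d d hdD (Or.inl rfl) d' hd'D hd'd_ne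
      exact p6_contra G h6 d' (v (i - 1)) (x (i - 1)) (x i) (v (i + 1)) d
        hd'vm hx0.1 hA hx1.2 hdv2.symm
        hd'x0 hd'xi hd'v2 hd'd
        hvmxi ⟨S1ne.symm, fun h => S1na h.symm⟩ ⟨hdvm.1.symm, fun h => hdvm.2 h.symm⟩
        hx0v2 ⟨hdx0.1.symm, fun h => hdx0.2 h.symm⟩ ⟨hdxi.1.symm, fun h => hdxi.2 h.symm⟩
    · -- P6 : v(i-1), x(i-1), v i, x i, v(i+1), d
      exact p6_contra G h6 (v (i - 1)) (x (i - 1)) (v i) (x i) (v (i + 1)) d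
        hx0.1 hx0.2 hx1.1 hx1.2 hdv2.symm
        d01 hvmxi ⟨S1ne.symm, fun h => S1na h.symm⟩ ⟨hdvm.1.symm, fun h => hdvm.2 h.symm⟩
        ⟨ne01, hA⟩ hx0v2 ⟨hdx0.1.symm, fun h => hdx0.2 h.symm⟩
        d12 ⟨hdvi.1.symm, fun h => hdvi.2 h.symm⟩ ⟨hdxi.1.symm, fun h => hdxi.2 h.symm⟩
  -- Step 2 : no auxiliary vertex is in D
  intro i
  refine ⟨hvD i, ?_⟩
  intro hxiD
  have em1 : i - 1 + 1 = i := by ring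
  have em2 : i + 1 + 1 = i + 2 := by ring
  have hx0 := hx (i - 1); rw [em1] at hx0
  have hx1 := hx i
  have hx2 := hx (i + 1); rw [em2] at hx2
  obtain ⟨S1ne, S1na, S1w⟩ := key (i + 1) (i - 1)
    (by intro h; apply hz1; linear_combination -h)
    (by intro h; apply hz2; linear_combination -h)
    (by intro h; apply hz3; linear_combination -h)
  obtain ⟨S2ne, S2na, S2w⟩ := key i (i + 2)
    (by intro h; apply hz3; linear_combination h)
    (by intro h; apply hz2; linear_combination h)
    (by intro h; apply hz1; linear_combination h)
  have d01 := dist_facts (i - 1); rw [em1] at d01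
  have d12 := dist_facts i
  have d23 := dist_facts (i + 1); rw [em2] at d23
  -- basic non-adjacency facts
  have nacm : v (i - 1) ≠ x i ∧ ¬G.Adj (v (i - 1)) (x i) := by
    constructor
    · intro h; exact S1na (h ▸ hx1.2).symm
    · intro h; exact S1w _ ⟨hx1.2.symm, h.symm⟩
  have nmv2 : v (i - 1) ≠ v (i + 1) ∧ ¬G.Adj (v (i - 1)) (v (i + 1)) :=
    ⟨S1ne.symm, fun h => S1na h.symm⟩
  have nmx2 : v (i - 1) ≠ x (i + 1) ∧ ¬G.Adj (v (i - 1)) (x (i + 1)) := by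
    constructor
    · intro h; exact S1na (h ▸ hx2.1)
    · intro h; exact S1w _ ⟨hx2.1, h.symm⟩
  have hx0v2 : x (i - 1) ≠ v (i + 1) ∧ ¬G.Adj (x (i - 1)) (v (i + 1)) := by
    constructor
    · intro h; exact S1na (h ▸ hx0.1).symm
    · intro h; exact S1w _ ⟨h.symm, hx0.1.symm⟩
  have nv1x2 : v i ≠ x (i + 1) ∧ ¬G.Adj (v i) (x (i + 1)) := by
    constructor
    · intro h; exact S2na (h ▸ hx2.2)
    · intro h; exact S2w _ ⟨h, hx2.2⟩
  have nx0P : x (i - 1) ≠ v (i + 2) ∧ ¬G.Adj (x (i - 1)) (v (i + 2)) := by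
    constructor
    · intro h; exact S2na (h ▸ hx0.2).symm
    · intro h; exact S2w _ ⟨hx0.2.symm, h⟩
  have nx1P : x i ≠ v (i + 2) ∧ ¬G.Adj (x i) (v (i + 2)) := by
    constructor
    · intro h; exact S2na (h ▸ hx1.1)
    · intro h; exact S2w _ ⟨hx1.1, h⟩
  have nx2m : x (i + 1) ≠ v (i - 1) ∧ ¬G.Adj (x (i + 1)) (v (i - 1)) :=
    ⟨nmx2.1.symm, fun h => nmx2.2 h.symm⟩
  have nv1P : v i ≠ v (i + 2) ∧ ¬G.Adj (v i) (v (i + 2)) := ⟨S2ne, S2na⟩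
  have ne_mP : v (i - 1) ≠ v (i + 2) := by
    intro h
    apply hz3
    linear_combination -(hinj h)
  have ne01 : x (i - 1) ≠ x i := fun h => hx0v2.2 (h ▸ hx1.2)
  have ne12 : x i ≠ x (i + 1) := fun h => nx1P.2 (h ▸ hx2.2)
  have ne02 : x (i - 1) ≠ x (i + 1) := fun h => nx0P.2 (h ▸ hx2.2)
  -- dominators
  obtain ⟨e', ⟨he'D, he'v⟩, _⟩ := hED (v (i - 1))
  have he'vm : G.Adj e' (v (i - 1)) := by
    rcases he'v with h | h
    · exact absurd (h ▸ he'D) (hvD (i - 1))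
    · exact h
  have he'ne : e' ≠ x i := by rintro rfl; exact nacm.2 he'vm.symm
  have e'v1 := excl (v i) (x i) hxiD (Or.inr hx1.1.symm) e' he'D he'ne
  have e'v2 := excl (v (i + 1)) (x i) hxiD (Or.inr hx1.2) e' he'D he'ne
  have e'x1 := excl (x i) (x i) hxiD (Or.inl rfl) e' he'D he'ne
  obtain ⟨e, ⟨heD, hev⟩, _⟩ := hED (v (i + 2))
  have hevm : G.Adj e (v (i + 2)) := by
    rcases hev with h | h
    · exact absurd (h ▸ heD) (hvD (i + 2))
    · exact h
  have hene : e ≠ x i := by rintro rfl; exact nx1P.2 hevm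
  have ev1 := excl (v i) (x i) hxiD (Or.inr hx1.1.symm) e heD hene
  have ev2 := excl (v (i + 1)) (x i) hxiD (Or.inr hx1.2) e heD hene
  have ex1 := excl (x i) (x i) hxiD (Or.inl rfl) e heD hene
  by_cases hA : G.Adj (x (i - 1)) (x i) <;> by_cases hB : G.Adj (x i) (x (i + 1)) <;>
    by_cases hC : G.Adj (x (i - 1)) (x (i + 1))
  · -- A ∧ B ∧ C
    by_cases hW : G.Adj (v (i - 1)) (v (i + 2))
    · -- house: C4 [v(i-1), x(i-1), x(i+1), v(i+2)] + apex x i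
      exact house_contra G hH (v (i - 1)) (x (i - 1)) (x (i + 1)) (v (i + 2)) (x i)
        hx0.1 hC hx2.2 hW.symm hA.symm hB
        nmx2 nx0P ⟨nacm.1.symm, fun h => nacm.2 h.symm⟩ nx1P
    · have exA' := excl (x (i - 1)) (x i) hxiD (Or.inr hA.symm) e' he'D he'ne
      have exB' := excl (x (i + 1)) (x i) hxiD (Or.inr hB) e' he'D he'ne
      have exA := excl (x (i - 1)) (x i) hxiD (Or.inr hA.symm) e heD hene
      have exB := excl (x (i + 1)) (x i) hxiD (Or.inr hB) e heD hene
      by_cases heq : e' = e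
      · subst heq
        exact c5_contra G (hhole 5 (by norm_num)) e' (v (i - 1)) (x (i - 1)) (x (i + 1)) (v (i + 2))
          he'vm hx0.1 hC hx2.2 hevm.symm
          exA' exB' nmx2 ⟨ne_mP, hW⟩ nx0P
      · have e'P := excl (v (i + 2)) e heD (Or.inr hevm) e' he'D heq
        have e'e := excl e e heD (Or.inl rfl) e' he'D heq
        have em' := excl (v (i - 1)) e' he'D (Or.inr he'vm) e heD (Ne.symm heq)
        exact p6_contra G h6 e' (v (i - 1)) (x (i - 1)) (x (i + 1)) (v (i + 2)) e
          he'vm hx0.1 hC hx2.2 hevm.symm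
          exA' exB' e'P e'e
          nmx2 ⟨ne_mP, hW⟩ ⟨em'.1.symm, fun h => em'.2 h.symm⟩
          nx0P ⟨exA.1.symm, fun h => exA.2 h.symm⟩ ⟨exB.1.symm, fun h => exB.2 h.symm⟩
  · -- A ∧ B ∧ ¬C
    by_cases hW : G.Adj (v (i - 1)) (v (i + 2))
    · exact c5_contra G (hhole 5 (by norm_num)) (v (i - 1)) (x (i - 1)) (x i) (x (i + 1)) (v (i + 2))
        hx0.1 hA hB hx2.2 hW.symm
        nacm nmx2 ⟨ne02, hC⟩ nx0P nx1P
    · have exA' := excl (x (i - 1)) (x i) hxiD (Or.inr hA.symm) e' he'D he'ne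
      have exB' := excl (x (i + 1)) (x i) hxiD (Or.inr hB) e' he'D he'ne
      by_cases heq : e' = e
      · subst heq
        exact c6_contra G (hhole 6 (by norm_num)) e' (v (i - 1)) (x (i - 1)) (x i) (x (i + 1)) (v (i + 2))
          he'vm hx0.1 hA hB hx2.2 hevm.symm
          exA' e'x1 exB' nacm nmx2 ⟨ne_mP, hW⟩ ⟨ne02, hC⟩ nx0P nx1P
      · have e'P := excl (v (i + 2)) e heD (Or.inr hevm) e' he'D heq
        exact p6_contra G h6 e' (v (i - 1)) (x (i - 1)) (x i) (x (i + 1)) (v (i + 2))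
          he'vm hx0.1 hA hB hx2.2
          exA' e'x1 exB' e'P
          nacm nmx2 ⟨ne_mP, hW⟩ ⟨ne02, hC⟩ nx0P nx1P
  · -- A ∧ ¬B ∧ C : house C4 [x(i+1), x(i-1), x i, v(i+1)] + apex v i
    exact house_contra G hH (x (i + 1)) (x (i - 1)) (x i) (v (i + 1)) (v i)
      hC.symm hA hx1.2 hx2.1 hx0.2.symm hx1.1
      ⟨ne12.symm, fun h => hB h.symm⟩ hx0v2 nv1x2 d12
  · -- A ∧ ¬B ∧ ¬C
    by_cases hW : G.Adj (v (i - 1)) (v (i + 2))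
    · exact c6_contra G (hhole 6 (by norm_num)) (v (i - 1)) (x (i - 1)) (x i) (v (i + 1)) (x (i + 1)) (v (i + 2))
        hx0.1 hA hx1.2 hx2.1 hx2.2 hW.symm
        nacm nmv2 nmx2 hx0v2 ⟨ne02, hC⟩ nx0P ⟨ne12, hB⟩ nx1P d23
    · exact p6_contra G h6 (v (i - 1)) (x (i - 1)) (x i) (v (i + 1)) (x (i + 1)) (v (i + 2))
        hx0.1 hA hx1.2 hx2.1 hx2.2
        nacm nmv2 nmx2 ⟨ne_mP, hW⟩ hx0v2 ⟨ne02, hC⟩ nx0P ⟨ne12, hB⟩ nx1P d23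
  · -- ¬A ∧ B ∧ C : house C4 [x(i-1), x(i+1), x i, v i] + apex v(i+1)
    exact house_contra G hH (x (i - 1)) (x (i + 1)) (x i) (v i) (v (i + 1))
      hC hB.symm hx1.1.symm hx0.2.symm hx2.1 hx1.2.symm
      ⟨ne01, hA⟩ ⟨nv1x2.1.symm, fun h => nv1x2.2 h.symm⟩
      ⟨hx0v2.1.symm, fun h => hx0v2.2 h.symm⟩ ⟨d12.1.symm, fun h => d12.2 h.symm⟩
  · -- ¬A ∧ B ∧ ¬C
    by_cases hW : G.Adj (v (i - 1)) (v (i + 2))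
    · exact c6_contra G (hhole 6 (by norm_num)) (v (i + 2)) (x (i + 1)) (x i) (v i) (x (i - 1)) (v (i - 1))
        hx2.2.symm hB.symm hx1.1.symm hx0.2.symm hx0.1.symm hW
        ⟨nx1P.1.symm, fun h => nx1P.2 h.symm⟩ ⟨nv1P.1.symm, fun h => nv1P.2 h.symm⟩
        ⟨nx0P.1.symm, fun h => nx0P.2 h.symm⟩
        ⟨nv1x2.1.symm, fun h => nv1x2.2 h.symm⟩ ⟨ne02.symm, fun h => hC h.symm⟩ nx2m
        ⟨ne01.symm, fun h => hA h.symm⟩ ⟨nacm.1.symm, fun h => nacm.2 h.symm⟩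
        ⟨d01.1.symm, fun h => d01.2 h.symm⟩
    · exact p6_contra G h6 (v (i + 2)) (x (i + 1)) (x i) (v i) (x (i - 1)) (v (i - 1))
        hx2.2.symm hB.symm hx1.1.symm hx0.2.symm hx0.1.symm
        ⟨nx1P.1.symm, fun h => nx1P.2 h.symm⟩ ⟨nv1P.1.symm, fun h => nv1P.2 h.symm⟩
        ⟨nx0P.1.symm, fun h => nx0P.2 h.symm⟩ ⟨ne_mP.symm, fun h => hW h.symm⟩
        ⟨nv1x2.1.symm, fun h => nv1x2.2 h.symm⟩ ⟨ne02.symm, fun h => hC h.symm⟩ nx2m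
        ⟨ne01.symm, fun h => hA h.symm⟩ ⟨nacm.1.symm, fun h => nacm.2 h.symm⟩
        ⟨d01.1.symm, fun h => d01.2 h.symm⟩
  · -- ¬A ∧ ¬B ∧ C : C5 hole [x(i-1), v i, x i, v(i+1), x(i+1)]
    exact c5_contra G (hhole 5 (by norm_num)) (x (i - 1)) (v i) (x i) (v (i + 1)) (x (i + 1))
      hx0.2 hx1.1 hx1.2 hx2.1 hC.symm
      ⟨ne01, hA⟩ hx0v2 d12 nv1x2 ⟨ne12, hB⟩
  · -- ¬A ∧ ¬B ∧ ¬C : P6 [v(i-1), x(i-1), v i, x i, v(i+1), x(i+1)]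
    exact p6_contra G h6 (v (i - 1)) (x (i - 1)) (v i) (x i) (v (i + 1)) (x (i + 1))
      hx0.1 hx0.2 hx1.1 hx1.2 hx2.1
      d01 nacm nmv2 nmx2 ⟨ne01, hA⟩ hx0v2 ⟨ne02, hC⟩ d12 nv1x2 ⟨ne12, hB⟩
end

section
/- Let G be a (P₆, house, hole, domino)-free graph with efficient dominating set D, with an induced C_k (k ≥ 4) in G² with real vertices v₁,...,v_k and auxiliary vertices x₁,...,x_k as above, where D avoids all real and auxiliary vertices. Then each v_i has a D-neighbor d_i, and these d₁,...,d_k are pairwise distinct, i.e., each d_i has exactly one neighbor among {v₁,...,v_k}. -/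
open SimpleGraph Finset

variable {V : Type*}

lemma no_p6 (G : SimpleGraph V) (h6 : _root_.Free G (pathGraph 6)) (a b c d e f : V)
    (eab : G.Adj a b) (ebc : G.Adj b c) (ecd : G.Adj c d) (ede : G.Adj d e) (eef : G.Adj e f)
    (nac : ¬ G.Adj a c) (nad : ¬ G.Adj a d) (nae : ¬ G.Adj a e) (naf : ¬ G.Adj a f)
    (nbd : ¬ G.Adj b d) (nbe : ¬ G.Adj b e) (nbf : ¬ G.Adj b f)
    (nce : ¬ G.Adj c e) (ncf : ¬ G.Adj c f) (ndf : ¬ G.Adj d f)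
    (hac : a ≠ c) (had : a ≠ d) (hae : a ≠ e) (haf : a ≠ f)
    (hbd : b ≠ d) (hbe : b ≠ e) (hbf : b ≠ f)
    (hce : c ≠ e) (hcf : c ≠ f) (hdf : d ≠ f) : False := by
  apply h6.false
  have hab := eab.ne; have hbc := ebc.ne; have hcd := ecd.ne; have hde := ede.ne
  have hef := eef.ne
  refine ⟨⟨![a,b,c,d,e,f], ?_⟩, ?_⟩
  · intro i j hij
    fin_cases i <;> fin_cases j <;>
      simp only [Matrix.cons_val', Matrix.cons_val_zero, Matrix.cons_val_one,
        Matrix.head_cons, Matrix.cons_val_fin_one, Matrix.head_fin_const,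
        Matrix.cons_val_succ] at hij <;>
      first
        | rfl
        | exact absurd hij (by assumption)
        | exact absurd hij.symm (by assumption)
  have sab := eab.symm; have sbc := ebc.symm; have scd := ecd.symm; have sde := ede.symm
  have sef := eef.symm
  have nca : ¬ G.Adj c a := fun h => nac h.symm
  have nda : ¬ G.Adj d a := fun h => nad h.symm
  have nea : ¬ G.Adj e a := fun h => nae h.symm
  have nfa : ¬ G.Adj f a := fun h => naf h.symm
  have ndb : ¬ G.Adj d b := fun h => nbd h.symm
  have neb : ¬ G.Adj e b := fun h => nbe h.symm
  have nfb : ¬ G.Adj f b := fun h => nbf h.symm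
  have nec : ¬ G.Adj e c := fun h => nce h.symm
  have nfc : ¬ G.Adj f c := fun h => ncf h.symm
  have nfd : ¬ G.Adj f d := fun h => ndf h.symm
  intro i j
  fin_cases i <;> fin_cases j <;>
    simp [pathGraph_adj] <;>
    first
      | exact G.loopless _
      | assumption
      | exact iff_of_false (by assumption) (by decide)
      | exact iff_of_true (by assumption) (by decide)

lemma no_c5 (G : SimpleGraph V) (h5 : _root_.Free G (cycleGraph 5)) (a b c d e : V)
    (eab : G.Adj a b) (ebc : G.Adj b c) (ecd : G.Adj c d) (ede : G.Adj d e) (eea : G.Adj e a)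
    (nac : ¬ G.Adj a c) (nad : ¬ G.Adj a d)
    (nbd : ¬ G.Adj b d) (nbe : ¬ G.Adj b e) (nce : ¬ G.Adj c e)
    (hac : a ≠ c) (had : a ≠ d) (hbd : b ≠ d) (hbe : b ≠ e) (hce : c ≠ e) : False := by
  apply h5.false
  have hab := eab.ne; have hbc := ebc.ne; have hcd := ecd.ne; have hde := ede.ne
  have hea := eea.ne
  refine ⟨⟨![a,b,c,d,e], ?_⟩, ?_⟩
  · intro i j hij
    fin_cases i <;> fin_cases j <;>
      simp only [Matrix.cons_val', Matrix.cons_val_zero, Matrix.cons_val_one,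
        Matrix.head_cons, Matrix.cons_val_fin_one, Matrix.head_fin_const,
        Matrix.cons_val_succ] at hij <;>
      first
        | rfl
        | exact absurd hij (by assumption)
        | exact absurd hij.symm (by assumption)
  have sab := eab.symm; have sbc := ebc.symm; have scd := ecd.symm; have sde := ede.symm
  have sea := eea.symm
  have nca : ¬ G.Adj c a := fun h => nac h.symm
  have nda : ¬ G.Adj d a := fun h => nad h.symm
  have ndb : ¬ G.Adj d b := fun h => nbd h.symm
  have neb : ¬ G.Adj e b := fun h => nbe h.symm
  have nec : ¬ G.Adj e c := fun h => nce h.symm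
  intro i j
  fin_cases i <;> fin_cases j <;>
    simp [cycleGraph_adj'] <;>
    first
      | exact G.loopless _
      | assumption
      | exact iff_of_false (by assumption) (by decide)
      | exact iff_of_true (by assumption) (by decide)

lemma no_c6 (G : SimpleGraph V) (h6c : _root_.Free G (cycleGraph 6)) (a b c d e f : V)
    (eab : G.Adj a b) (ebc : G.Adj b c) (ecd : G.Adj c d) (ede : G.Adj d e) (eef : G.Adj e f)
    (efa : G.Adj f a)
    (nac : ¬ G.Adj a c) (nad : ¬ G.Adj a d) (nae : ¬ G.Adj a e)
    (nbd : ¬ G.Adj b d) (nbe : ¬ G.Adj b e) (nbf : ¬ G.Adj b f)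
    (nce : ¬ G.Adj c e) (ncf : ¬ G.Adj c f) (ndf : ¬ G.Adj d f)
    (hac : a ≠ c) (had : a ≠ d) (hae : a ≠ e)
    (hbd : b ≠ d) (hbe : b ≠ e) (hbf : b ≠ f)
    (hce : c ≠ e) (hcf : c ≠ f) (hdf : d ≠ f) : False := by
  apply h6c.false
  have hab := eab.ne; have hbc := ebc.ne; have hcd := ecd.ne; have hde := ede.ne
  have hef := eef.ne; have hfa := efa.ne
  refine ⟨⟨![a,b,c,d,e,f], ?_⟩, ?_⟩
  · intro i j hij
    fin_cases i <;> fin_cases j <;>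
      simp only [Matrix.cons_val', Matrix.cons_val_zero, Matrix.cons_val_one,
        Matrix.head_cons, Matrix.cons_val_fin_one, Matrix.head_fin_const,
        Matrix.cons_val_succ] at hij <;>
      first
        | rfl
        | exact absurd hij (by assumption)
        | exact absurd hij.symm (by assumption)
  have sab := eab.symm; have sbc := ebc.symm; have scd := ecd.symm; have sde := ede.symm
  have sef := eef.symm; have sfa := efa.symm
  have nca : ¬ G.Adj c a := fun h => nac h.symm
  have nda : ¬ G.Adj d a := fun h => nad h.symm
  have nea : ¬ G.Adj e a := fun h => nae h.symm
  have ndb : ¬ G.Adj d b := fun h => nbd h.symm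
  have neb : ¬ G.Adj e b := fun h => nbe h.symm
  have nfb : ¬ G.Adj f b := fun h => nbf h.symm
  have nec : ¬ G.Adj e c := fun h => nce h.symm
  have nfc : ¬ G.Adj f c := fun h => ncf h.symm
  have nfd : ¬ G.Adj f d := fun h => ndf h.symm
  intro i j
  fin_cases i <;> fin_cases j <;>
    simp [cycleGraph_adj'] <;>
    first
      | exact G.loopless _
      | assumption
      | exact iff_of_false (by assumption) (by decide)
      | exact iff_of_true (by assumption) (by decide)

/-- No induced house: `a-b-c-d-a` an induced `C₄`, apex `e` adjacent to `a` and `d` only. -/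
lemma no_house (G : SimpleGraph V) (hH : _root_.Free G house) (a b c d e : V)
    (eab : G.Adj a b) (ebc : G.Adj b c) (ecd : G.Adj c d) (eda : G.Adj d a)
    (eea : G.Adj e a) (eed : G.Adj e d)
    (nac : ¬ G.Adj a c) (nbd : ¬ G.Adj b d) (neb : ¬ G.Adj e b) (nec : ¬ G.Adj e c)
    (hac : a ≠ c) (hbd : b ≠ d) (heb : e ≠ b) (hec : e ≠ c) : False := by
  apply hH.false
  have hab := eab.ne; have hbc := ebc.ne; have hcd := ecd.ne; have hda := eda.ne
  have hea := eea.ne; have hed := eed.ne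
  refine ⟨⟨![a,c,e,b,d], ?_⟩, ?_⟩
  · intro i j hij
    fin_cases i <;> fin_cases j <;>
      simp only [Matrix.cons_val', Matrix.cons_val_zero, Matrix.cons_val_one,
        Matrix.head_cons, Matrix.cons_val_fin_one, Matrix.head_fin_const,
        Matrix.cons_val_succ] at hij <;>
      first
        | rfl
        | exact absurd hij (by assumption)
        | exact absurd hij.symm (by assumption)
  have sab := eab.symm; have sbc := ebc.symm; have scd := ecd.symm; have sda := eda.symm
  have sea := eea.symm; have sed := eed.symm
  have nca : ¬ G.Adj c a := fun h => nac h.symm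
  have ndb : ¬ G.Adj d b := fun h => nbd h.symm
  have nbe : ¬ G.Adj b e := fun h => neb h.symm
  have nce : ¬ G.Adj c e := fun h => nec h.symm
  intro i j
  fin_cases i <;> fin_cases j <;>
    simp [house, pathGraph_adj] <;>
    first
      | exact G.loopless _
      | assumption
      | exact iff_of_false (by assumption) (by decide)
      | exact iff_of_true (by assumption) (by decide)


theorem stmt6 (G : SimpleGraph V) (h6 : _root_.Free G (pathGraph 6)) (hH : _root_.Free G house)
    (hhole : HoleFree G) (hdom : _root_.Free G domino)
    (D : Set V) (hED : IsEDS G D)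
    (k : ℕ) (hk : 4 ≤ k) (v : ZMod k → V) (hinj : Function.Injective v)
    (hadj : ∀ i : ZMod k, (square G).Adj (v i) (v (i + 1)))
    (hnon : ∀ i j : ZMod k, j ≠ i - 1 → j ≠ i → j ≠ i + 1 → ¬ (square G).Adj (v i) (v j))
    (x : ZMod k → V) (hd2 : ∀ i : ZMod k, G.dist (v i) (v (i + 1)) = 2)
    (hx : ∀ i : ZMod k, G.Adj (v i) (x i) ∧ G.Adj (x i) (v (i + 1)))
    (hxadj : ∀ i : ZMod k, G.Adj (x i) (x (i + 1)))
    (hDout : ∀ i : ZMod k, v i ∉ D ∧ x i ∉ D) :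
    ∀ i : ZMod k, ∃ d ∈ D, G.Adj d (v i) ∧ ∀ j : ZMod k, j ≠ i → ¬ G.Adj d (v j) := by
  haveI : NeZero k := ⟨by omega⟩
  have z : ∀ n : ℕ, 0 < n → n < 4 → (n : ZMod k) ≠ 0 := by
    intro n hn hn4 h
    have hdvd := (ZMod.natCast_eq_zero_iff n k).mp h
    have := Nat.le_of_dvd hn hdvd
    omega
  have z1 : (1 : ZMod k) ≠ 0 := by simpa using z 1 (by omega) (by omega)
  have z2 : (2 : ZMod k) ≠ 0 := by simpa using z 2 (by omega) (by omega)
  have z3 : (3 : ZMod k) ≠ 0 := by simpa using z 3 (by omega) (by omega)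
  have zne : ∀ (c : ZMod k), c ≠ 0 → ∀ a b : ZMod k, a - b = c → a ≠ b := by
    intro c hc a b hab heq
    rw [heq, sub_self] at hab
    exact hc hab.symm
  have tri : ∀ a b : ZMod k, (square G).Adj (v a) (v b) → b = a - 1 ∨ b = a ∨ b = a + 1 := by
    intro a b hsq
    by_contra hc
    push_neg at hc
    exact hnon a b hc.1 hc.2.1 hc.2.2 hsq
  have NV : ∀ a b : ZMod k, ¬ G.Adj (v a) (v b) := by
    intro a b hab
    have hvne := hab.ne
    have hne : a ≠ b := fun h => hvne (congrArg v h)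
    have noncon : ∀ c : ZMod k, ¬ G.Adj (v c) (v (c + 1)) := by
      intro c hc
      have h1 := (SimpleGraph.dist_eq_one_iff_adj (G := G)).mpr hc
      rw [hd2 c] at h1
      omega
    rcases tri a b ⟨hvne, Or.inl hab⟩ with h | h | h
    · apply noncon b
      rw [show b + 1 = a from by rw [h]; ring]
      exact hab.symm
    · exact hne h.symm
    · apply noncon a
      rw [← h]
      exact hab
  have NVX : ∀ a b : ZMod k, b ≠ a - 1 → b ≠ a → ¬ G.Adj (v a) (x b) := by
    intro a b hb1 hb2 hadj'
    have hna : a ≠ b := fun h => hb2 h.symm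
    have hna1 : a ≠ b + 1 := fun h => hb1 (by rw [h]; ring)
    have s1 : (square G).Adj (v a) (v b) :=
      ⟨fun h => hna (hinj h), Or.inr ⟨x b, hadj', (hx b).1.symm⟩⟩
    have s2 : (square G).Adj (v a) (v (b + 1)) :=
      ⟨fun h => hna1 (hinj h), Or.inr ⟨x b, hadj', (hx b).2⟩⟩
    rcases tri a b s1 with h | h | h
    · exact hb1 h
    · exact hb2 h
    · rcases tri a (b + 1) s2 with h' | h' | h'
      · exact z3 (by linear_combination h' - h)
      · exact z2 (by linear_combination h' - h)
      · exact z1 (by linear_combination h' - h)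
  have VneX : ∀ a b : ZMod k, v a ≠ x b := by
    intro a b h
    exact NV b a (by rw [h]; exact (hx b).1)
  have uniq : ∀ (a z z' : V), z ∈ D → (z = a ∨ G.Adj z a) → z' ∈ D → (z' = a ∨ G.Adj z' a) →
      z' = z := by
    intro a zz z' hz h hz' h'
    obtain ⟨w, -, hw⟩ := hED a
    exact (hw z' ⟨hz', h'⟩).trans (hw zz ⟨hz, h⟩).symm
  have key : ∀ (i : ZMod k) (d : V), d ∈ D → G.Adj d (v i) → G.Adj d (v (i + 1)) → False := by
    intro i d hdD h1 h2
    have ND : ∀ j : ZMod k, j ≠ i → j ≠ i + 1 → ¬ G.Adj d (v j) := by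
      intro j hj1 hj2 hadj'
      have s1 : (square G).Adj (v j) (v i) :=
        ⟨fun h => hj1 (hinj h), Or.inr ⟨d, hadj'.symm, h1⟩⟩
      have s2 : (square G).Adj (v j) (v (i + 1)) :=
        ⟨fun h => hj2 (hinj h), Or.inr ⟨d, hadj'.symm, h2⟩⟩
      rcases tri j i s1 with h | h | h
      · exact hj2 (by rw [h]; ring)
      · exact hj1 h.symm
      · rcases tri j (i + 1) s2 with h' | h' | h'
        · exact z3 (by linear_combination h' - h)
        · exact z2 (by linear_combination h' - h)
        · exact z1 (by linear_combination h' - h)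
    have epq : G.Adj (v (i - 1)) (x (i - 1)) := (hx (i - 1)).1
    have eqr : G.Adj (x (i - 1)) (v i) := by
      have := (hx (i - 1)).2
      rwa [show i - 1 + 1 = i from by ring] at this
    have etu : G.Adj (v (i + 1)) (x (i + 1)) := (hx (i + 1)).1
    have euw : G.Adj (x (i + 1)) (v (i + 2)) := by
      have := (hx (i + 1)).2
      rwa [show i + 1 + 1 = i + 2 from by ring] at this
    have dneV : ∀ j : ZMod k, d ≠ v j := fun j h => (hDout j).1 (h ▸ hdD)
    have dneX : ∀ j : ZMod k, d ≠ x j := fun j h => (hDout j).2 (h ▸ hdD)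
    have npu : ¬ G.Adj (v (i - 1)) (x (i + 1)) :=
      NVX (i - 1) (i + 1) (zne 3 z3 _ _ (by ring)) (zne 2 z2 _ _ (by ring))
    have nru : ¬ G.Adj (v i) (x (i + 1)) :=
      NVX i (i + 1) (zne 2 z2 _ _ (by ring)) (zne 1 z1 _ _ (by ring))
    have nqt : ¬ G.Adj (v (i + 1)) (x (i - 1)) :=
      NVX (i + 1) (i - 1) (zne 1 z1 _ _ (by ring)).symm (zne 2 z2 _ _ (by ring)).symm
    have nqw : ¬ G.Adj (v (i + 2)) (x (i - 1)) :=
      NVX (i + 2) (i - 1) (zne 2 z2 _ _ (by ring)).symm (zne 3 z3 _ _ (by ring)).symm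
    have nsp : ¬ G.Adj d (v (i - 1)) :=
      ND (i - 1) (zne 1 z1 _ _ (by ring)).symm (zne 2 z2 _ _ (by ring)).symm
    have nsw : ¬ G.Adj d (v (i + 2)) :=
      ND (i + 2) (zne 2 z2 _ _ (by ring)) (zne 1 z1 _ _ (by ring))
    have qneu : x (i - 1) ≠ x (i + 1) := by
      intro h
      apply nqw
      rw [← h] at euw
      exact euw.symm
    by_cases hA : G.Adj d (x (i - 1))
    · by_cases hC : G.Adj d (x (i + 1))
      · -- A ∧ C : bring in the dominator g of v (i+2)
        obtain ⟨g, ⟨hgD, hg'⟩, -⟩ := hED (v (i + 2))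
        have hgw : G.Adj g (v (i + 2)) := by
          rcases hg' with h | h
          · exact absurd (h ▸ hgD) (hDout (i + 2)).1
          · exact h
        have gnd : g ≠ d := fun h => nsw (h ▸ hgw)
        have gnq : ¬ G.Adj g (x (i - 1)) :=
          fun ha => gnd (uniq (x (i - 1)) d g hdD (Or.inr hA) hgD (Or.inr ha))
        have gnu : ¬ G.Adj g (x (i + 1)) :=
          fun ha => gnd (uniq (x (i + 1)) d g hdD (Or.inr hC) hgD (Or.inr ha))
        have gns : ¬ G.Adj g d :=
          fun ha => gnd (uniq d d g hdD (Or.inl rfl) hgD (Or.inr ha))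
        have gneV : ∀ j : ZMod k, g ≠ v j := fun j h => (hDout j).1 (h ▸ hgD)
        have gneX : ∀ j : ZMod k, g ≠ x j := fun j h => (hDout j).2 (h ▸ hgD)
        by_cases hgp : G.Adj g (v (i - 1))
        · by_cases hE : G.Adj (x (i - 1)) (x (i + 1))
          · -- C5 : g, v(i-1), x(i-1), x(i+1), v(i+2)
            exact no_c5 G (hhole 5 (by norm_num)) g (v (i - 1)) (x (i - 1)) (x (i + 1))
              (v (i + 2)) hgp epq hE euw hgw.symm
              gnq gnu npu (fun h => NV _ _ h)
              (fun h => nqw h.symm)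
              (gneX _) (gneX _) (VneX _ _) (hinj.ne (zne 3 z3 _ _ (by ring)).symm)
              ((VneX _ _).symm)
          · -- C6 : g, v(i-1), x(i-1), d, x(i+1), v(i+2)
            exact no_c6 G (hhole 6 (by norm_num)) g (v (i - 1)) (x (i - 1)) d (x (i + 1))
              (v (i + 2)) hgp epq hA.symm hC euw hgw.symm
              gnq gns gnu (fun h => nsp h.symm) npu (fun h => NV _ _ h)
              hE (fun h => nqw h.symm) nsw
              (gneX _) gnd (gneX _) ((dneV _).symm) (VneX _ _)
              (hinj.ne (zne 3 z3 _ _ (by ring)).symm) qneu ((VneX _ _).symm) (dneV _)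
        · obtain ⟨h', ⟨hhD, hh'⟩, -⟩ := hED (v (i - 1))
          have hhp : G.Adj h' (v (i - 1)) := by
            rcases hh' with h | h
            · exact absurd (h ▸ hhD) (hDout (i - 1)).1
            · exact h
          have hnd : h' ≠ d := fun h => nsp (h ▸ hhp)
          have hng : h' ≠ g := fun h => hgp (h ▸ hhp)
          have hneV : ∀ j : ZMod k, h' ≠ v j := fun j h => (hDout j).1 (h ▸ hhD)
          have hneX : ∀ j : ZMod k, h' ≠ x j := fun j h => (hDout j).2 (h ▸ hhD)
          have hnq : ¬ G.Adj h' (x (i - 1)) :=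
            fun ha => hnd (uniq (x (i - 1)) d h' hdD (Or.inr hA) hhD (Or.inr ha))
          have hnu : ¬ G.Adj h' (x (i + 1)) :=
            fun ha => hnd (uniq (x (i + 1)) d h' hdD (Or.inr hC) hhD (Or.inr ha))
          have hnw : ¬ G.Adj h' (v (i + 2)) :=
            fun ha => hng (uniq (v (i + 2)) g h' hgD (Or.inr hgw) hhD (Or.inr ha))
          have hngadj : ¬ G.Adj h' g :=
            fun ha => hng (uniq g g h' hgD (Or.inl rfl) hhD (Or.inr ha))
          by_cases hE : G.Adj (x (i - 1)) (x (i + 1))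
          · -- P6 : h', v(i-1), x(i-1), x(i+1), v(i+2), g
            exact no_p6 G h6 h' (v (i - 1)) (x (i - 1)) (x (i + 1)) (v (i + 2)) g
              hhp epq hE euw hgw.symm
              hnq hnu hnw hngadj npu (fun h => NV _ _ h) (fun h => hgp h.symm)
              (fun h => nqw h.symm) (fun h => gnq h.symm) (fun h => gnu h.symm)
              (hneX _) (hneX _) (hneV _) hng (VneX _ _)
              (hinj.ne (zne 3 z3 _ _ (by ring)).symm) ((gneV _).symm)
              ((VneX _ _).symm) ((gneX _).symm) ((gneX _).symm)
          · -- P6 : v(i-1), x(i-1), d, x(i+1), v(i+2), g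
            exact no_p6 G h6 (v (i - 1)) (x (i - 1)) d (x (i + 1)) (v (i + 2)) g
              epq hA.symm hC euw hgw.symm
              (fun h => nsp h.symm) npu (fun h => NV _ _ h) (fun h => hgp h.symm)
              hE (fun h => nqw h.symm) (fun h => gnq h.symm)
              nsw (fun h => gns h.symm) (fun h => gnu h.symm)
              ((dneV _).symm) (VneX _ _) (hinj.ne (zne 3 z3 _ _ (by ring)).symm)
              ((gneV _).symm) qneu ((VneX _ _).symm) ((gneX _).symm)
              (dneV _) gnd.symm ((gneX _).symm)
      · by_cases hE : G.Adj (x (i - 1)) (x (i + 1))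
        · -- house : C4 d, v(i+1), x(i+1), x(i-1) with apex v i
          exact no_house G hH d (v (i + 1)) (x (i + 1)) (x (i - 1)) (v i)
            h2 etu hE.symm hA.symm h1.symm eqr.symm
            hC nqt (NV _ _) nru
            (dneX _) (VneX _ _) (hinj.ne (zne 1 z1 _ _ (by ring)).symm) (VneX _ _)
        · -- P6 : v(i+2), x(i+1), v(i+1), d, x(i-1), v(i-1)
          exact no_p6 G h6 (v (i + 2)) (x (i + 1)) (v (i + 1)) d (x (i - 1)) (v (i - 1))
            euw.symm etu.symm h2.symm hA epq.symm
            (NV _ _) (fun h => nsw h.symm) nqw (NV _ _)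
            (fun h => hC h.symm) (fun h => hE h.symm) (fun h => npu h.symm)
            nqt (NV _ _) nsp
            (hinj.ne (zne 1 z1 _ _ (by ring))) ((dneV _).symm) (VneX _ _)
            (hinj.ne (zne 3 z3 _ _ (by ring))) ((dneX _).symm) qneu.symm
            ((VneX _ _).symm) (VneX _ _) (hinj.ne (zne 2 z2 _ _ (by ring))) (dneV _)
    · by_cases hC : G.Adj d (x (i + 1))
      · by_cases hE : G.Adj (x (i - 1)) (x (i + 1))
        · -- house : C4 x(i+1), x(i-1), v i, d with apex v (i+1)
          exact no_house G hH (x (i + 1)) (x (i - 1)) (v i) d (v (i + 1))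
            hE.symm eqr h1.symm hC etu h2.symm
            (fun h => nru h.symm) (fun h => hA h.symm) nqt (NV _ _)
            ((VneX _ _).symm) ((dneX _).symm) (VneX _ _) (hinj.ne (zne 1 z1 _ _ (by ring)))
        · -- P6 : v(i-1), x(i-1), v i, d, x(i+1), v(i+2)
          exact no_p6 G h6 (v (i - 1)) (x (i - 1)) (v i) d (x (i + 1)) (v (i + 2))
            epq eqr h1.symm hC euw
            (NV _ _) (fun h => nsp h.symm) npu (NV _ _)
            (fun h => hA h.symm) hE (fun h => nqw h.symm)
            nru (NV _ _) nsw
            (hinj.ne (zne 1 z1 _ _ (by ring)).symm) ((dneV _).symm) (VneX _ _)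
            (hinj.ne (zne 3 z3 _ _ (by ring)).symm) ((dneX _).symm) qneu
            ((VneX _ _).symm) (VneX _ _) (hinj.ne (zne 2 z2 _ _ (by ring)).symm) (dneV _)
      · by_cases hE : G.Adj (x (i - 1)) (x (i + 1))
        · -- C5 : x(i-1), v i, d, v(i+1), x(i+1)
          exact no_c5 G (hhole 5 (by norm_num)) (x (i - 1)) (v i) d (v (i + 1)) (x (i + 1))
            eqr h1.symm h2 etu hE.symm
            (fun h => hA h.symm) (fun h => nqt h.symm) (NV _ _) nru hC
            ((dneX _).symm) ((VneX _ _).symm) (hinj.ne (zne 1 z1 _ _ (by ring)).symm)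
            (VneX _ _) (dneX _)
        · -- P6 : v(i-1), x(i-1), v i, d, v(i+1), x(i+1)
          exact no_p6 G h6 (v (i - 1)) (x (i - 1)) (v i) d (v (i + 1)) (x (i + 1))
            epq eqr h1.symm h2 etu
            (NV _ _) (fun h => nsp h.symm) (NV _ _) npu
            (fun h => hA h.symm) (fun h => nqt h.symm) hE
            (NV _ _) nru hC
            (hinj.ne (zne 1 z1 _ _ (by ring)).symm) ((dneV _).symm)
            (hinj.ne (zne 2 z2 _ _ (by ring)).symm) (VneX _ _)
            ((dneX _).symm) ((VneX _ _).symm) qneu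
            (hinj.ne (zne 1 z1 _ _ (by ring)).symm) (VneX _ _) (dneX _)
  intro i
  obtain ⟨d, ⟨hdD, hd'⟩, -⟩ := hED (v i)
  have h1 : G.Adj d (v i) := by
    rcases hd' with h | h
    · exact absurd (h ▸ hdD) (hDout i).1
    · exact h
  refine ⟨d, hdD, h1, ?_⟩
  intro j hji hadj'
  have s1 : (square G).Adj (v i) (v j) :=
    ⟨fun h => hji (hinj h).symm, Or.inr ⟨d, h1.symm, hadj'⟩⟩
  rcases tri i j s1 with h | h | h
  · refine key (i - 1) d hdD (by rw [← h]; exact hadj') ?_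
    rw [show i - 1 + 1 = i from by ring]
    exact h1
  · exact hji h
  · exact key i d hdD h1 (by rw [← h]; exact hadj')
end

section
/- Let G be a P₆-free graph and suppose G² contains an induced C_k with k ≥ 5 on vertices v₁,...,v_k. Then d_G(v_i, v_{i+1}) = 1 holds for at most one index i (mod k). -/
open SimpleGraph Finset

variable {V : Type*}

lemma myLengthDrop {W : Type*} {G : SimpleGraph W} :
    ∀ {a b : W} (p : G.Walk a b) (n : ℕ), (p.drop n).length = p.length - n := by
  intro a b p
  induction p with
  | nil => intro n; cases n <;> simp [SimpleGraph.Walk.drop]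
  | cons h q ih =>
    intro n
    cases n with
    | zero => simp [SimpleGraph.Walk.drop]
    | succ n => simp [SimpleGraph.Walk.drop, ih n]

lemma myDistTri {W : Type*} {G : SimpleGraph W} {a b c : W}
    (h1 : G.Reachable a b) (h2 : G.Reachable b c) :
    G.dist a c ≤ G.dist a b + G.dist b c := by
  obtain ⟨p, hp⟩ := h1.exists_walk_length_eq_dist
  obtain ⟨q, hq⟩ := h2.exists_walk_length_eq_dist
  have := SimpleGraph.dist_le (p.append q)
  rwa [SimpleGraph.Walk.length_append, hp, hq] at this

lemma myGeodesic {W : Type*} {G : SimpleGraph W} {s t : W} (p : G.Walk s t)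
    (hp : p.length = G.dist s t) {i : ℕ} (hi : i ≤ p.length) :
    G.dist s (p.getVert i) = i ∧ G.dist (p.getVert i) t = p.length - i ∧
      G.Reachable s (p.getVert i) ∧ G.Reachable (p.getVert i) t := by
  have r2 : G.Reachable (p.getVert i) t := ⟨p.drop i⟩
  have d2 : G.dist (p.getVert i) t ≤ p.length - i := by
    have := SimpleGraph.dist_le (p.drop i)
    rwa [myLengthDrop] at this
  have hrev : p.reverse.getVert (p.length - i) = p.getVert i := by
    rw [SimpleGraph.Walk.getVert_reverse]
    congr 1
    omega
  have r1 : G.Reachable s (p.getVert i) := by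
    have : G.Reachable (p.reverse.getVert (p.length - i)) s := ⟨p.reverse.drop (p.length - i)⟩
    rw [hrev] at this
    exact this.symm
  have d1 : G.dist s (p.getVert i) ≤ i := by
    have := SimpleGraph.dist_le (p.reverse.drop (p.length - i))
    rw [myLengthDrop, SimpleGraph.Walk.length_reverse] at this
    rw [hrev] at this
    rw [SimpleGraph.dist_comm]
    omega
  have tri := myDistTri r1 r2
  rw [← hp] at tri
  refine ⟨by omega, by omega, r1, r2⟩

/-- From a pair at distance ≥ 4 extract the first five vertices of a geodesic:
an induced path of 5 vertices starting at `s`. -/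
lemma myFive {W : Type*} {G : SimpleGraph W} {s t : W} (hr : G.Reachable s t)
    (h4 : 4 ≤ G.dist s t) :
    ∃ g : ℕ → W, g 0 = s ∧ (∀ i, i < 4 → G.Adj (g i) (g (i + 1))) ∧
      (∀ i j, j < 5 → i + 2 ≤ j → ¬ G.Adj (g i) (g j)) ∧
      (∀ i j, i < j → j < 5 → g i ≠ g j) := by
  obtain ⟨p, hp⟩ := hr.exists_walk_length_eq_dist
  have hlen : 4 ≤ p.length := by omega
  refine ⟨p.getVert, p.getVert_zero, ?_, ?_, ?_⟩
  · intro i hi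
    exact p.adj_getVert_succ (by omega)
  · intro i j hj hij hadj
    obtain ⟨di1, di2, ri1, ri2⟩ := myGeodesic p hp (show i ≤ p.length by omega)
    obtain ⟨dj1, dj2, rj1, rj2⟩ := myGeodesic p hp (show j ≤ p.length by omega)
    have h1 : G.dist (p.getVert i) (p.getVert j) = 1 :=
      SimpleGraph.dist_eq_one_iff_adj.mpr hadj
    have tri : G.dist (p.getVert i) t ≤
        G.dist (p.getVert i) (p.getVert j) + G.dist (p.getVert j) t :=
      myDistTri (ri1.symm.trans rj1) rj2
    omega
  · intro i j hij hj he
    obtain ⟨di1, _, _, _⟩ := myGeodesic p hp (show i ≤ p.length by omega)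
    obtain ⟨dj1, _, _, _⟩ := myGeodesic p hp (show j ≤ p.length by omega)
    rw [he] at di1
    omega

lemma myP6 {G : SimpleGraph V} (h6 : _root_.Free G (pathGraph 6)) (x : ℕ → V)
    (hxinj : ∀ i j, i < j → j < 6 → x i ≠ x j)
    (ha : ∀ i, i < 5 → G.Adj (x i) (x (i + 1)))
    (hna : ∀ i j, j < 6 → i + 2 ≤ j → ¬ G.Adj (x i) (x j)) : False := by
  have h6' : IsEmpty (pathGraph 6 ↪g G) := h6
  apply h6'.false
  refine ⟨⟨fun i => x i.val, ?_⟩, ?_⟩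
  · intro a b hab
    by_contra hne
    rcases Nat.lt_or_ge a.val b.val with h | h
    · exact hxinj a.val b.val h b.isLt hab
    · have : b.val < a.val := by
        rcases Nat.lt_or_ge b.val a.val with h' | h'
        · exact h'
        · exact absurd (Fin.ext (by omega)) hne
      exact hxinj b.val a.val this a.isLt hab.symm
  · intro a b
    show G.Adj (x a.val) (x b.val) ↔ (pathGraph 6).Adj a b
    rw [pathGraph_adj]
    constructor
    · intro h
      by_contra hc
      push_neg at hc
      have hne : (a : ℕ) ≠ b := by
        intro he
        exact G.loopless.irrefl _ (by rw [show a = b from Fin.ext he] at h; exact h)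
      rcases Nat.lt_or_ge a.val b.val with hlt | hge
      · exact hna a.val b.val b.isLt (by omega) h
      · exact hna b.val a.val a.isLt (by omega) h.symm
    · rintro (h | h)
      · have := ha a.val (by omega)
        rwa [h] at this
      · have := ha b.val (by omega)
        rw [h] at this
        exact this.symm

lemma noTwoStd {G : SimpleGraph V} {k : ℕ} (hk : 5 ≤ k) (v : ZMod k → V)
    (hinj : Function.Injective v)
    (hnon : ∀ i j : ZMod k, j ≠ i - 1 → j ≠ i → j ≠ i + 1 → ¬ (square G).Adj (v i) (v j)) :
    ∀ i : ZMod k, G.Adj (v i) (v (i + 1)) → G.Adj (v (i + 1)) (v (i + 1 + 1)) → False := by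
  haveI : NeZero k := ⟨by omega⟩
  have cne : ∀ a b : ℕ, a % k ≠ b % k → ((a : ZMod k) ≠ (b : ZMod k)) := by
    intro a b h e; exact h ((ZMod.natCast_eq_natCast_iff' a b k).mp e)
  have small : ∀ a : ℕ, a < k → a % k = a := fun a h => Nat.mod_eq_of_lt h
  intro i a b
  have c1 : (i + 1 + 1) ≠ i - 1 := by
    intro e
    have e3 : ((3 : ℕ) : ZMod k) = ((0 : ℕ) : ZMod k) := by push_cast; linear_combination e
    exact cne 3 0 (by rw [small 3 (by omega), small 0 (by omega)]; omega) e3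
  have c2 : (i + 1 + 1) ≠ i := by
    intro e
    have e2 : ((2 : ℕ) : ZMod k) = ((0 : ℕ) : ZMod k) := by push_cast; linear_combination e
    exact cne 2 0 (by rw [small 2 (by omega), small 0 (by omega)]; omega) e2
  have c3 : (i + 1 + 1) ≠ i + 1 := by
    intro e
    have e1 : ((1 : ℕ) : ZMod k) = ((0 : ℕ) : ZMod k) := by push_cast; linear_combination e
    exact cne 1 0 (by rw [small 1 (by omega), small 0 (by omega)]; omega) e1
  have hne : v i ≠ v (i + 1 + 1) := fun e => c2 (hinj e).symm
  exact hnon i (i + 1 + 1) c1 c2 c3 ⟨hne, Or.inr ⟨v (i + 1), a, b⟩⟩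


lemma main_aux {G : SimpleGraph V} (h6 : _root_.Free G (pathGraph 6)) {k : ℕ} (hk : 5 ≤ k)
    (u : ZMod k → V) (hinj : Function.Injective u)
    (hadj : ∀ i : ZMod k, (square G).Adj (u i) (u (i + 1)))
    (hnon : ∀ i j : ZMod k, j ≠ i - 1 → j ≠ i → j ≠ i + 1 → ¬ (square G).Adj (u i) (u j))
    {n : ℕ} (hn3 : 3 ≤ n) (hnk : n + 2 ≤ k)
    (e0 : G.Adj (u ((0 : ℕ) : ZMod k)) (u ((1 : ℕ) : ZMod k)))
    (en : G.Adj (u ((n : ℕ) : ZMod k)) (u ((n + 1 : ℕ) : ZMod k))) : False := by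
  haveI : NeZero k := ⟨by omega⟩
  -- cast helpers
  have cst : ∀ a b : ℕ, a % k = b % k → ((a : ZMod k) = (b : ZMod k)) := by
    intro a b h; rwa [ZMod.natCast_eq_natCast_iff']
  have cne : ∀ a b : ℕ, a % k ≠ b % k → ((a : ZMod k) ≠ (b : ZMod k)) := by
    intro a b h e; exact h ((ZMod.natCast_eq_natCast_iff' a b k).mp e)
  have uinj : ∀ a b : ℕ, a % k ≠ b % k → u a ≠ u b := by
    intro a b h e; exact cne a b h (hinj e)
  have small : ∀ a : ℕ, a < k → a % k = a := fun a h => Nat.mod_eq_of_lt h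
  -- far lemma, ZMod version
  have farZ : ∀ p q : ZMod k, q + 1 ≠ p → q ≠ p → q ≠ p + 1 →
      (¬ G.Adj (u p) (u q)) ∧ (∀ x, G.Adj (u p) x → G.Adj x (u q) → False) := by
    intro p q h1 h2 h3
    have hnn := hnon p q (by intro e; exact h1 (by rw [e]; ring)) h2 h3
    have hne : u p ≠ u q := fun e => h2 (hinj e).symm
    constructor
    · intro hA; exact hnn ⟨hne, Or.inl hA⟩
    · intro x hx1 hx2; exact hnn ⟨hne, Or.inr ⟨x, hx1, hx2⟩⟩
  -- far lemma, ℕ version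
  have farN : ∀ p q : ℕ, (q + 1) % k ≠ p % k → q % k ≠ p % k → q % k ≠ (p + 1) % k →
      (¬ G.Adj (u p) (u q)) ∧ (∀ x, G.Adj (u p) x → G.Adj x (u q) → False) := by
    intro p q h1 h2 h3
    refine farZ p q ?_ (cne q p h2) ?_
    · intro e; exact h1 (((ZMod.natCast_eq_natCast_iff' _ _ k).mp (by push_cast; rw [e])))
    · intro e; exact h3 (((ZMod.natCast_eq_natCast_iff' _ _ k).mp (by push_cast; rw [e])))
  -- no two consecutive edges
  have noTwo : ∀ i : ZMod k, G.Adj (u i) (u (i + 1)) → G.Adj (u (i + 1)) (u (i + 1 + 1)) → False := by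
    intro i a b
    have c1 : (i + 1 + 1) + 1 ≠ i := by
      intro e
      have e3 : ((3 : ℕ) : ZMod k) = ((0 : ℕ) : ZMod k) := by push_cast; linear_combination e
      exact cne 3 0 (by rw [small 3 (by omega), small 0 (by omega)]; omega) e3
    have c2 : (i + 1 + 1) ≠ i := by
      intro e
      have e2 : ((2 : ℕ) : ZMod k) = ((0 : ℕ) : ZMod k) := by push_cast; linear_combination e
      exact cne 2 0 (by rw [small 2 (by omega), small 0 (by omega)]; omega) e2
    have c3 : (i + 1 + 1) ≠ i + 1 := by
      intro e
      have e1 : ((1 : ℕ) : ZMod k) = ((0 : ℕ) : ZMod k) := by push_cast; linear_combination e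
      exact cne 1 0 (by rw [small 1 (by omega), small 0 (by omega)]; omega) e1
    exact (farZ i (i + 1 + 1) c1 c2 c3).2 (u (i + 1)) a b
  -- midpoints
  have castsucc : ∀ t : ℕ, ((t : ZMod k) + 1) = ((t + 1 : ℕ) : ZMod k) := by
    intro t; push_cast; ring
  have hmid : ∀ t : ℕ, ∃ x, (¬ G.Adj (u t) (u ((t + 1 : ℕ) : ZMod k)) →
      G.Adj (u t) x ∧ G.Adj x (u ((t + 1 : ℕ) : ZMod k))) := by
    intro t
    by_cases hA : G.Adj (u t) (u ((t + 1 : ℕ) : ZMod k))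
    · exact ⟨u t, fun h => absurd hA h⟩
    · have h2 := hadj (t : ZMod k)
      rw [castsucc t] at h2
      obtain ⟨-, h2 | ⟨x, hx⟩⟩ := h2
      · exact absurd h2 hA
      · exact ⟨x, fun _ => hx⟩
  choose m hm using hmid
  -- the connecting set
  set S : Set V := {x | (∃ t : ℕ, 1 ≤ t ∧ t ≤ n + 1 ∧ x = u t) ∨
      (∃ t : ℕ, 1 ≤ t ∧ t ≤ n - 1 ∧ ¬ G.Adj (u t) (u ((t + 1 : ℕ) : ZMod k)) ∧ x = m t)} with hS
  have memU : ∀ t : ℕ, 1 ≤ t → t ≤ n + 1 → u t ∈ S := by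
    intro t h1 h2; exact Or.inl ⟨t, h1, h2, rfl⟩
  have memM : ∀ t : ℕ, 1 ≤ t → t ≤ n - 1 → ¬ G.Adj (u t) (u ((t + 1 : ℕ) : ZMod k)) → m t ∈ S := by
    intro t h1 h2 h3; exact Or.inr ⟨t, h1, h2, h3, rfl⟩
  have indAdj : ∀ (a b : V) (ha : a ∈ S) (hb : b ∈ S), G.Adj a b →
      (G.induce S).Adj ⟨a, ha⟩ ⟨b, hb⟩ := by
    intro a b ha hb hab; exact hab
  have step : ∀ (t : ℕ) (h1 : 1 ≤ t) (h2 : t ≤ n),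
      (G.induce S).Reachable ⟨u t, memU t h1 (by omega)⟩
        ⟨u ((t+1:ℕ) : ZMod k), memU (t+1) (by omega) (by omega)⟩ := by
    intro t h1 h2
    by_cases hA : G.Adj (u t) (u ((t + 1 : ℕ) : ZMod k))
    · exact (indAdj _ _ _ _ hA).reachable
    · have ht : t ≤ n - 1 := by
        rcases Nat.lt_or_ge t n with h | h
        · omega
        · exfalso; apply hA; have : t = n := by omega
          subst this; exact en
      obtain ⟨hm1, hm2⟩ := hm t hA
      exact ((indAdj _ _ _ (memM t h1 ht hA) hm1).reachable).trans
        ((indAdj _ _ (memM t h1 ht hA) _ hm2).reachable)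
  have reach : ∀ (t : ℕ) (h1 : 1 ≤ t) (h2 : t ≤ n + 1),
      (G.induce S).Reachable ⟨u ((1:ℕ) : ZMod k), memU 1 le_rfl (by omega)⟩
        ⟨u t, memU t h1 h2⟩ := by
    intro t
    induction t with
    | zero => intro h1 h2; omega
    | succ t ih =>
      intro h1 h2
      rcases Nat.eq_or_lt_of_le h1 with he | hlt
      · have : t = 0 := by omega
        subst this
        exact SimpleGraph.Reachable.refl _
      · exact (ih (by omega) (by omega)).trans (step t (by omega) (by omega))
  have BP : ∀ x, x ∈ S → G.Adj (u ((0:ℕ) : ZMod k)) x → x = u ((1:ℕ) : ZMod k) := by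
    rintro x (⟨t, ht1, ht2, rfl⟩ | ⟨t, ht1, ht2, hA, rfl⟩) hAdj
    · by_cases he : t = 1
      · subst he; rfl
      · exfalso
        rcases Nat.lt_or_ge t (n+1) with hlt | hge
        · exact (farN 0 t (by rw [small (t+1) (by omega), small 0 (by omega)]; omega)
            (by rw [small t (by omega), small 0 (by omega)]; omega)
            (by rw [small t (by omega), small 1 (by omega)]; omega)).1 hAdj
        · have ht : t = n + 1 := by omega
          subst ht
          rcases Nat.eq_or_lt_of_le hnk with hke | hklt
          · refine noTwo ((n : ℕ) : ZMod k) ?_ ?_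
            · rw [castsucc]; exact en
            · rw [castsucc, castsucc]
              have hz : ((n + 1 + 1 : ℕ) : ZMod k) = ((0:ℕ) : ZMod k) :=
                cst (n+1+1) 0 (by rw [show n+1+1 = k by omega, Nat.mod_self, small 0 (by omega)])
              rw [hz]
              exact hAdj.symm
          · exact (farN 0 (n+1) (by rw [small (n+2) (by omega), small 0 (by omega)]; omega)
              (by rw [small (n+1) (by omega), small 0 (by omega)]; omega)
              (by rw [small (n+1) (by omega), small 1 (by omega)]; omega)).1 hAdj
    · exfalso
      obtain ⟨hm1, hm2⟩ := hm t hA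
      exact (farN 0 (t+1) (by rw [small (t+2) (by omega), small 0 (by omega)]; omega)
        (by rw [small (t+1) (by omega), small 0 (by omega)]; omega)
        (by rw [small (t+1) (by omega), small 1 (by omega)]; omega)).2 (m t) hAdj hm2
  have BQ : ∀ x, x ∈ S → G.Adj x (u ((n+1:ℕ) : ZMod k)) → x = u ((n:ℕ) : ZMod k) := by
    rintro x (⟨t, ht1, ht2, rfl⟩ | ⟨t, ht1, ht2, hA, rfl⟩) hAdj
    · by_cases he : t = n
      · subst he; rfl
      · exfalso
        rcases Nat.lt_or_ge t (n+1) with hlt | hge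
        · have hc1 : (n+1+1) % k ≠ t % k := by
            rcases Nat.eq_or_lt_of_le hnk with hke | hklt
            · rw [show n+1+1 = k by omega, Nat.mod_self, small t (by omega)]; omega
            · rw [small (n+1+1) (by omega), small t (by omega)]; omega
          exact (farN t (n+1) hc1
            (by rw [small (n+1) (by omega), small t (by omega)]; omega)
            (by rw [small (n+1) (by omega), small (t+1) (by omega)]; omega)).1 hAdj
        · have ht : t = n + 1 := by omega
          subst ht
          exact G.loopless.irrefl _ hAdj
    · exfalso
      obtain ⟨hm1, hm2⟩ := hm t hA
      have hc1 : (n+1+1) % k ≠ t % k := by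
        rcases Nat.eq_or_lt_of_le hnk with hke | hklt
        · rw [show n+1+1 = k by omega, Nat.mod_self, small t (by omega)]; omega
        · rw [small (n+1+1) (by omega), small t (by omega)]; omega
      exact (farN t (n+1) hc1
        (by rw [small (n+1) (by omega), small t (by omega)]; omega)
        (by rw [small (n+1) (by omega), small (t+1) (by omega)]; omega)).2 (m t) hm1 hAdj
  have u0S : u ((0:ℕ) : ZMod k) ∉ S := by
    rintro (⟨t, ht1, ht2, he⟩ | ⟨t, ht1, ht2, hA, he⟩)
    · exact uinj 0 t (by rw [small 0 (by omega), small t (by omega)]; omega) he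
    · obtain ⟨hm1, hm2⟩ := hm t hA
      rw [← he] at hm2
      exact (farN 0 (t+1) (by rw [small (t+2) (by omega), small 0 (by omega)]; omega)
        (by rw [small (t+1) (by omega), small 0 (by omega)]; omega)
        (by rw [small (t+1) (by omega), small 1 (by omega)]; omega)).1 hm2
  have f1n1 := farN 1 (n+1)
    (by
      rcases Nat.eq_or_lt_of_le hnk with hke | hklt
      · rw [show n+1+1 = k by omega, Nat.mod_self, small 1 (by omega)]; omega
      · rw [small (n+1+1) (by omega), small 1 (by omega)]; omega)
    (by rw [small (n+1) (by omega), small 1 (by omega)]; omega)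
    (by rw [small (n+1) (by omega), small 2 (by omega)]; omega)
  have f1n := farN 1 n
    (by rw [small (n+1) (by omega), small 1 (by omega)]; omega)
    (by rw [small n (by omega), small 1 (by omega)]; omega)
    (by rw [small n (by omega), small 2 (by omega)]; omega)
  have hmemS : u ((1:ℕ) : ZMod k) ∈ S := memU 1 le_rfl (by omega)
  have hmemQ : u ((n+1:ℕ) : ZMod k) ∈ S := memU (n+1) (by omega) le_rfl
  have hr : (G.induce S).Reachable ⟨u ((1:ℕ) : ZMod k), hmemS⟩ ⟨u ((n+1:ℕ) : ZMod k), hmemQ⟩ := by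
    have := reach (n+1) (by omega) le_rfl
    convert this using 2
  have hd : 4 ≤ (G.induce S).dist ⟨u ((1:ℕ) : ZMod k), hmemS⟩ ⟨u ((n+1:ℕ) : ZMod k), hmemQ⟩ := by
    by_contra hcon
    push_neg at hcon
    obtain ⟨p, hp⟩ := hr.exists_walk_length_eq_dist
    set y : ℕ → V := fun i => ((p.getVert i : {x // x ∈ S}) : V) with hy
    have y0 : y 0 = u ((1:ℕ) : ZMod k) := congrArg Subtype.val p.getVert_zero
    have yL : y p.length = u ((n+1:ℕ) : ZMod k) := congrArg Subtype.val p.getVert_length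
    have ymem : ∀ i, y i ∈ S := fun i => (p.getVert i).2
    have yadj : ∀ i, i < p.length → G.Adj (y i) (y (i+1)) :=
      fun i hi => p.adj_getVert_succ hi
    have hlen : p.length ≤ 3 := by omega
    rcases Nat.lt_or_ge p.length 1 with h0 | h1
    · have : p.length = 0 := by omega
      rw [this] at yL
      rw [y0] at yL
      exact uinj 1 (n+1) (by rw [small 1 (by omega), small (n+1) (by omega)]; omega) yL
    rcases Nat.lt_or_ge p.length 2 with h2 | h2
    · have hL : p.length = 1 := by omega
      have := yadj 0 (by omega)
      rw [y0, show (0:ℕ)+1 = p.length by omega, yL] at this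
      exact f1n1.1 this
    rcases Nat.lt_or_ge p.length 3 with h3 | h3
    · have hL : p.length = 2 := by omega
      have a1 := yadj 0 (by omega)
      have a2 := yadj 1 (by omega)
      rw [y0] at a1
      rw [show (1:ℕ)+1 = p.length by omega, yL] at a2
      exact f1n1.2 (y 1) a1 a2
    · have hL : p.length = 3 := by omega
      have a1 := yadj 0 (by omega)
      have a2 := yadj 1 (by omega)
      have a3 := yadj 2 (by omega)
      rw [y0] at a1
      rw [show (2:ℕ)+1 = p.length by omega, yL] at a3
      have hy2 : y 2 = u ((n:ℕ) : ZMod k) := BQ (y 2) (ymem 2) a3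
      rw [hy2] at a2
      exact f1n.2 (y 1) a1 a2
  obtain ⟨g, hg0, gadj, gnon, gne⟩ := myFive hr hd
  have hg0' : ((g 0 : {x // x ∈ S}) : V) = u ((1:ℕ) : ZMod k) := congrArg Subtype.val hg0
  refine myP6 h6 (fun i => if i = 0 then u ((0:ℕ) : ZMod k) else ((g (i-1) : {x // x ∈ S}) : V))
    ?_ ?_ ?_
  · intro i j hij hj6
    rcases Nat.eq_zero_or_pos i with hi0 | hi1
    · subst hi0
      simp only [reduceIte, if_neg (by omega : j ≠ 0)]
      intro he
      exact u0S (he ▸ (g (j-1)).2)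
    · simp only [if_neg (by omega : i ≠ 0), if_neg (by omega : j ≠ 0)]
      intro he
      exact gne (i-1) (j-1) (by omega) (by omega) (Subtype.val_injective he)
  · intro i hi5
    rcases Nat.eq_zero_or_pos i with hi0 | hi1
    · subst hi0
      simp only [reduceIte, if_neg (by omega : (0:ℕ)+1 ≠ 0)]
      rw [show (0:ℕ)+1-1 = 0 from rfl, hg0']
      exact e0
    · simp only [if_neg (by omega : i ≠ 0), if_neg (by omega : i+1 ≠ 0)]
      have := gadj (i-1) (by omega)
      rw [show i-1+1 = i+1-1 by omega] at this
      exact this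
  · intro i j hj6 hij
    rcases Nat.eq_zero_or_pos i with hi0 | hi1
    · subst hi0
      simp only [reduceIte, if_neg (by omega : j ≠ 0)]
      intro hAdj
      have := BP _ (g (j-1)).2 hAdj
      rw [← hg0'] at this
      exact gne 0 (j-1) (by omega) (by omega) (Subtype.val_injective this).symm
    · simp only [if_neg (by omega : i ≠ 0), if_neg (by omega : j ≠ 0)]
      intro hAdj
      exact gnon (i-1) (j-1) (by omega) (by omega) hAdj

theorem stmt10 (G : SimpleGraph V) (h6 : _root_.Free G (pathGraph 6))
    (k : ℕ) (hk : 5 ≤ k) (v : ZMod k → V) (hinj : Function.Injective v)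
    (hadj : ∀ i : ZMod k, (square G).Adj (v i) (v (i + 1)))
    (hnon : ∀ i j : ZMod k, j ≠ i - 1 → j ≠ i → j ≠ i + 1 → ¬ (square G).Adj (v i) (v j)) :
    ∀ i j : ZMod k, G.Adj (v i) (v (i + 1)) → G.Adj (v j) (v (j + 1)) → i = j := by
  intro i j hi hj
  by_contra hne
  haveI : NeZero k := ⟨by omega⟩
  -- rule out adjacent positions
  have hj1 : j ≠ i + 1 := by
    intro e
    subst e
    exact noTwoStd hk v hinj hnon i hi hj
  have hi1 : i ≠ j + 1 := by
    intro e
    subst e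
    exact noTwoStd hk v hinj hnon j hj hi
  -- general application with rotation
  have applyMain : ∀ a b : ZMod k, G.Adj (v a) (v (a + 1)) → G.Adj (v b) (v (b + 1)) →
      3 ≤ (b - a).val → (b - a).val + 2 ≤ k → False := by
    intro a b ha hb h3 hup
    have hcv : (((b - a).val : ℕ) : ZMod k) = b - a := ZMod.natCast_rightInverse _
    refine main_aux h6 hk (fun t => v (a + t)) (hinj.comp (add_right_injective a))
      (fun t => by simpa [add_assoc] using hadj (a + t))
      (fun s t h1 h2 h3 => by
        refine hnon (a + s) (a + t) ?_ ?_ ?_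
        · intro e; exact h1 (by linear_combination e)
        · intro e; exact h2 (by linear_combination e)
        · intro e; exact h3 (by linear_combination e))
      h3 hup ?_ ?_
    · simpa using ha
    · show G.Adj (v (a + (((b - a).val : ℕ) : ZMod k))) (v (a + ((((b - a).val + 1 : ℕ)) : ZMod k)))
      have h1 : a + (((b - a).val : ℕ) : ZMod k) = b := by rw [hcv]; ring
      have h2 : a + ((((b - a).val + 1 : ℕ)) : ZMod k) = b + 1 := by
        push_cast
        rw [hcv]; ring
      rw [h1, h2]
      exact hb
  have hc0 : j - i ≠ 0 := fun e => hne (by linear_combination -e)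
  have hcv1 : (j - i).val ≠ 0 := fun e => hc0 (by
    have := ZMod.natCast_rightInverse (n := k) (j - i)
    rw [e] at this
    rw [← this]
    simp)
  have hcv2 : (j - i).val ≠ 1 := by
    intro e
    apply hj1
    have := ZMod.natCast_rightInverse (n := k) (j - i)
    rw [e] at this
    push_cast at this
    linear_combination -this
  have hcvk : (j - i).val ≠ k - 1 := by
    intro e
    apply hi1
    have := ZMod.natCast_rightInverse (n := k) (j - i)
    rw [e] at this
    have hk1 : (((k - 1 : ℕ)) : ZMod k) = -1 := by
      have : ((k : ℕ) : ZMod k) = 0 := ZMod.natCast_self k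
      push_cast [Nat.cast_sub (by omega : 1 ≤ k)]
      rw [this]; ring
    rw [hk1] at this
    linear_combination this
  have hvlt : (j - i).val < k := ZMod.val_lt _
  rcases Nat.lt_or_ge (j - i).val 3 with hlt | hge
  · -- (j - i).val = 2, use the other orientation
    have h2 : (j - i).val = 2 := by omega
    have hneg : (i - j).val = k - 2 := by
      have : i - j = -(j - i) := by ring
      rw [this, ZMod.neg_val, if_neg hc0, h2]
    exact applyMain j i hj hi (by omega) (by omega)
  · exact applyMain i j hi hj hge (by omega)
end

section
/- Let G be a P₆-free graph with an induced C_k (k ≥ 5) in G² on real vertices v₁,...,v_k with auxiliary vertices x_i (common G-neighbors of v_i, v_{i+1} when d_G(v_i,v_{i+1})=2). If x_i and x_j are nonadjacent in G with j ∉ {i−1, i+1}, then v_{i+1}v_j ∉ E(G), v_{j+1}v_i ∉ E(G), and x_i, x_j have a common auxiliary neighbor x_r with r strictly between i and j on one arc of the cycle, and a common auxiliary neighbor x_s on the other arc. -/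
open SimpleGraph Finset

variable {V : Type*}

set_option maxHeartbeats 3000000 in
lemma no_p6_s11 {G : SimpleGraph V} (h6 : _root_.Free G (pathGraph 6))
    (u0 u1 u2 u3 u4 u5 : V)
    (a01 : G.Adj u0 u1) (a12 : G.Adj u1 u2) (a23 : G.Adj u2 u3)
    (a34 : G.Adj u3 u4) (a45 : G.Adj u4 u5)
    (n02 : ¬ G.Adj u0 u2) (n03 : ¬ G.Adj u0 u3) (n04 : ¬ G.Adj u0 u4)
    (n05 : ¬ G.Adj u0 u5) (n13 : ¬ G.Adj u1 u3) (n14 : ¬ G.Adj u1 u4)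
    (n15 : ¬ G.Adj u1 u5) (n24 : ¬ G.Adj u2 u4) (n25 : ¬ G.Adj u2 u5)
    (n35 : ¬ G.Adj u3 u5) : False := by
  have d02 : u0 ≠ u2 := fun h => n03 (by rw [h]; exact a23)
  have d03 : u0 ≠ u3 := fun h => n04 (by rw [h]; exact a34)
  have d04 : u0 ≠ u4 := fun h => n05 (by rw [h]; exact a45)
  have d05 : u0 ≠ u5 := fun h => n04 (by rw [h]; exact a45.symm)
  have d13 : u1 ≠ u3 := fun h => n14 (by rw [h]; exact a34)
  have d14 : u1 ≠ u4 := fun h => n15 (by rw [h]; exact a45)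
  have d15 : u1 ≠ u5 := fun h => n05 (by rw [← h]; exact a01)
  have d24 : u2 ≠ u4 := fun h => n25 (by rw [h]; exact a45)
  have d25 : u2 ≠ u5 := fun h => n15 (by rw [← h]; exact a12)
  have d35 : u3 ≠ u5 := fun h => n25 (by rw [← h]; exact a23)
  apply h6.false
  refine ⟨⟨![u0, u1, u2, u3, u4, u5], ?_⟩, ?_⟩
  · intro a b hab
    fin_cases a <;> fin_cases b <;> first
      | rfl
      | exact absurd hab a01.ne | exact absurd hab a01.ne'
      | exact absurd hab a12.ne | exact absurd hab a12.ne'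
      | exact absurd hab a23.ne | exact absurd hab a23.ne'
      | exact absurd hab a34.ne | exact absurd hab a34.ne'
      | exact absurd hab a45.ne | exact absurd hab a45.ne'
      | exact absurd hab d02 | exact absurd hab d02.symm
      | exact absurd hab d03 | exact absurd hab d03.symm
      | exact absurd hab d04 | exact absurd hab d04.symm
      | exact absurd hab d05 | exact absurd hab d05.symm
      | exact absurd hab d13 | exact absurd hab d13.symm
      | exact absurd hab d14 | exact absurd hab d14.symm
      | exact absurd hab d15 | exact absurd hab d15.symm
      | exact absurd hab d24 | exact absurd hab d24.symm
      | exact absurd hab d25 | exact absurd hab d25.symm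
      | exact absurd hab d35 | exact absurd hab d35.symm
  · intro a b
    constructor
    · intro h
      fin_cases a <;> fin_cases b <;> first
        | exact absurd h (G.loopless.irrefl _)
        | exact absurd h n02 | exact absurd h (fun h => n02 h.symm)
        | exact absurd h n03 | exact absurd h (fun h => n03 h.symm)
        | exact absurd h n04 | exact absurd h (fun h => n04 h.symm)
        | exact absurd h n05 | exact absurd h (fun h => n05 h.symm)
        | exact absurd h n13 | exact absurd h (fun h => n13 h.symm)
        | exact absurd h n14 | exact absurd h (fun h => n14 h.symm)
        | exact absurd h n15 | exact absurd h (fun h => n15 h.symm)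
        | exact absurd h n24 | exact absurd h (fun h => n24 h.symm)
        | exact absurd h n25 | exact absurd h (fun h => n25 h.symm)
        | exact absurd h n35 | exact absurd h (fun h => n35 h.symm)
        | (rw [pathGraph_adj]; simp)
    · intro h
      fin_cases a <;> fin_cases b <;>
        first
        | exact a01 | exact a01.symm
        | exact a12 | exact a12.symm
        | exact a23 | exact a23.symm
        | exact a34 | exact a34.symm
        | exact a45 | exact a45.symm
        | (rw [pathGraph_adj] at h; simp at h)

def GoodWalk {V : Type*} (G : SimpleGraph V) (A : V → Prop) (u0 u1 : V) (n : ℕ) : Prop :=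
  ∃ p : ℕ → V, p 0 = u0 ∧ p n = u1 ∧ (∀ a, a < n → G.Adj (p a) (p (a + 1))) ∧
    (∀ a, 0 < a → a ≤ n → A (p a))

lemma goodwalk_min {V : Type*} {G : SimpleGraph V} {A : V → Prop} {u0 u1 : V}
    (hex : ∃ n, GoodWalk G A u0 u1 n) :
    ∃ (n : ℕ) (p : ℕ → V), p 0 = u0 ∧ p n = u1 ∧ (∀ a, a < n → G.Adj (p a) (p (a + 1))) ∧
      (∀ a, 0 < a → a ≤ n → A (p a)) ∧
      (∀ a b, a + 2 ≤ b → b ≤ n → ¬ G.Adj (p a) (p b)) ∧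
      (∀ a b, a < b → b ≤ n → p a ≠ p b) := by
  classical
  obtain ⟨p, h0, h1, hch, hA⟩ := Nat.find_spec hex
  set N := Nat.find hex with hN
  have hmin : ∀ m, m < N → ¬ GoodWalk G A u0 u1 m := fun m hm => Nat.find_min hex hm
  have splice : ∀ s a : ℕ, 1 ≤ s → a + 1 + s ≤ N → ¬ G.Adj (p a) (p (a + 1 + s)) := by
    intro s a hs hle hadj
    apply hmin (N - s) (by omega)
    refine ⟨fun c => if c ≤ a then p c else p (c + s), ?_, ?_, ?_, ?_⟩
    · simp only [Nat.zero_le, if_pos]; exact h0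
    · simp only
      rw [if_neg (by omega), show N - s + s = N by omega]; exact h1
    · intro c hc
      by_cases h1c : c + 1 ≤ a
      · simp only [if_pos (by omega : c ≤ a), if_pos h1c]; exact hch c (by omega)
      · by_cases h2c : c ≤ a
        · have hca : c = a := by omega
          simp only [if_pos h2c, if_neg (by omega : ¬ c + 1 ≤ a)]
          rw [hca, show a + 1 + s = a + 1 + s from rfl]
          exact hadj
        · simp only [if_neg h2c, if_neg (by omega : ¬ c + 1 ≤ a)]
          rw [show c + 1 + s = (c + s) + 1 by omega]
          exact hch (c + s) (by omega)
    · intro c hc1 hc2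
      by_cases h1c : c ≤ a
      · simp only [if_pos h1c]; exact hA c hc1 (by omega)
      · simp only [if_neg h1c]; exact hA (c + s) (by omega) (by omega)
  have hchd : ∀ a b, a + 2 ≤ b → b ≤ N → ¬ G.Adj (p a) (p b) := by
    intro a b hab hbN hadj
    exact splice (b - a - 1) a (by omega) (by omega)
      (by rw [show a + 1 + (b - a - 1) = b by omega]; exact hadj)
  have hrep : ∀ a b, a < b → b ≤ N → p a ≠ p b := by
    intro a b hab hbN he
    by_cases hb : b = N
    · apply hmin a (by omega)
      refine ⟨p, h0, by rw [he, hb]; exact h1, fun c hc => hch c (by omega),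
        fun c hc1 hc2 => hA c hc1 (by omega)⟩
    · apply splice (b - a) a (by omega) (by omega)
      rw [show a + 1 + (b - a) = b + 1 by omega, he]
      exact hch b (by omega)
  exact ⟨N, p, h0, h1, hch, hA, hchd, hrep⟩

lemma goodwalk_single {V : Type*} {G : SimpleGraph V} {A : V → Prop} {u0 u1 : V}
    (h : G.Adj u0 u1) (hA1 : A u1) : GoodWalk G A u0 u1 1 := by
  refine ⟨fun c => if c = 0 then u0 else u1, by simp, by simp, ?_, ?_⟩
  · intro a ha
    have : a = 0 := by omega
    subst this
    simpa using h
  · intro a h1 h2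
    have : a = 1 := by omega
    subst this
    simpa using hA1

lemma goodwalk_snoc {V : Type*} {G : SimpleGraph V} {A : V → Prop} {u0 u1 u2 : V} {n : ℕ}
    (h : GoodWalk G A u0 u1 n) (hadj : G.Adj u1 u2) (hA2 : A u2) :
    GoodWalk G A u0 u2 (n + 1) := by
  obtain ⟨p, h0, h1, hch, hA⟩ := h
  refine ⟨fun c => if c ≤ n then p c else u2, ?_, ?_, ?_, ?_⟩
  · simp only [Nat.zero_le, if_pos]; exact h0
  · simp only; rw [if_neg (by omega)]
  · intro a ha
    by_cases h1a : a + 1 ≤ n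
    · simp only [if_pos (by omega : a ≤ n), if_pos h1a]; exact hch a (by omega)
    · have han : a = n := by omega
      simp only [if_pos (by omega : a ≤ n), if_neg h1a]
      rw [han, h1]
      exact hadj
  · intro a h1a h2a
    by_cases hle : a ≤ n
    · simp only [if_pos hle]; exact hA a h1a hle
    · simp only [if_neg hle]; exact hA2

abbrev Arc {V : Type*} {k : ℕ} (v x : ZMod k → V) (S : Set (ZMod k)) (i : ZMod k) (d : ℕ)
    (u : V) : Prop :=
  (∃ t, (1 ≤ (t - i).val ∧ (t - i).val ≤ d) ∧ u = v t) ∨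
    (∃ t, (t ∈ S ∧ 1 ≤ (t - i).val ∧ (t - i).val ≤ d) ∧ u = x t)

lemma zmod_val_gt {k : ℕ} (hk : 5 ≤ k) (a b : ZMod k) (ha : a ≠ 0)
    (h1 : 0 < (b - a).val) (h2 : (b - a).val < (-a).val) : a.val < b.val := by
  haveI : NeZero k := ⟨by omega⟩
  haveI : NeZero a := ⟨ha⟩
  have hna : (-a).val = k - a.val := ZMod.val_neg_of_ne_zero a
  have hsum : (a + (b - a)).val = a.val + (b - a).val :=
    ZMod.val_add_of_lt (by have := ZMod.val_lt a; omega)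
  rw [show a + (b - a) = b by ring] at hsum
  omega

section Aux

variable {k : ℕ} {G : SimpleGraph V} {v : ZMod k → V} {S : Set (ZMod k)} {x : ZMod k → V}

lemma zmod_nz (hk : 5 ≤ k) {c : ℕ} (h1 : 0 < c) (h2 : c ≤ 4) : (c : ZMod k) ≠ 0 := by
  haveI : NeZero k := ⟨by omega⟩
  rw [Ne, ZMod.natCast_eq_zero_iff]
  intro hd
  have := Nat.le_of_dvd h1 hd
  omega

lemma nonadjV (hnon : ∀ i j : ZMod k, j ≠ i - 1 → j ≠ i → j ≠ i + 1 →
      ¬ (square G).Adj (v i) (v j))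
    (s t : ZMod k) (h1 : t ≠ s - 1) (h2 : t ≠ s) (h3 : t ≠ s + 1) : ¬ G.Adj (v s) (v t) :=
  fun h => hnon s t h1 h2 h3 ⟨h.ne, Or.inl h⟩

lemma xAdjV (hk : 5 ≤ k) (hinj : Function.Injective v)
    (hnon : ∀ i j : ZMod k, j ≠ i - 1 → j ≠ i → j ≠ i + 1 → ¬ (square G).Adj (v i) (v j))
    (hS : ∀ i ∈ S, ¬ G.Adj (v i) (v (i + 1)) ∧ G.Adj (v i) (x i) ∧ G.Adj (x i) (v (i + 1)))
    {t : ZMod k} (ht : t ∈ S) {s : ZMod k} (h : G.Adj (x t) (v s)) : s = t ∨ s = t + 1 := by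
  have e1 : (1 : ZMod k) ≠ 0 := by exact_mod_cast zmod_nz hk (c := 1) (by norm_num) (by norm_num)
  have e2 : (2 : ZMod k) ≠ 0 := by exact_mod_cast zmod_nz hk (c := 2) (by norm_num) (by norm_num)
  have e3 : (3 : ZMod k) ≠ 0 := by exact_mod_cast zmod_nz hk (c := 3) (by norm_num) (by norm_num)
  by_contra hc
  push_neg at hc
  obtain ⟨hst, hst1⟩ := hc
  have sq1 : (square G).Adj (v t) (v s) :=
    ⟨fun he => hst ((hinj he).symm), Or.inr ⟨x t, (hS t ht).2.1, h⟩⟩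
  have hs : s = t - 1 := by
    by_contra hne
    exact hnon t s hne hst hst1 sq1
  have sq2 : (square G).Adj (v (t + 1)) (v s) := by
    refine ⟨fun he => ?_, Or.inr ⟨x t, (hS t ht).2.2.symm, h⟩⟩
    have : t + 1 = s := hinj he
    rw [hs] at this
    exact e2 (by linear_combination this)
  refine hnon (t + 1) s ?_ ?_ ?_ sq2
  · rw [hs]; intro h'; exact e1 (by linear_combination -h')
  · rw [hs]; intro h'; exact e2 (by linear_combination -h')
  · rw [hs]; intro h'; exact e3 (by linear_combination -h')

lemma xNeV (hk : 5 ≤ k) (hinj : Function.Injective v)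
    (hnon : ∀ i j : ZMod k, j ≠ i - 1 → j ≠ i → j ≠ i + 1 → ¬ (square G).Adj (v i) (v j))
    (hS : ∀ i ∈ S, ¬ G.Adj (v i) (v (i + 1)) ∧ G.Adj (v i) (x i) ∧ G.Adj (x i) (v (i + 1)))
    {t : ZMod k} (ht : t ∈ S) (s : ZMod k) : x t ≠ v s := by
  have e1 : (1 : ZMod k) ≠ 0 := by exact_mod_cast zmod_nz hk (c := 1) (by norm_num) (by norm_num)
  have e2 : (2 : ZMod k) ≠ 0 := by exact_mod_cast zmod_nz hk (c := 2) (by norm_num) (by norm_num)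
  have e3 : (3 : ZMod k) ≠ 0 := by exact_mod_cast zmod_nz hk (c := 3) (by norm_num) (by norm_num)
  intro he
  have h1 : G.Adj (v s) (v t) := by rw [← he]; exact (hS t ht).2.1.symm
  have h2 : G.Adj (v s) (v (t + 1)) := by rw [← he]; exact (hS t ht).2.2
  have hts : t ≠ s := by intro h; rw [h] at h1; exact G.loopless.irrefl _ h1
  have c1 : t = s - 1 ∨ t = s + 1 := by
    by_contra hc
    push_neg at hc
    exact hnon s t hc.1 hts hc.2 ⟨h1.ne, Or.inl h1⟩
  have ht1s : t + 1 ≠ s := by intro h; rw [h] at h2; exact G.loopless.irrefl _ h2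
  have c2 : t + 1 = s - 1 ∨ t + 1 = s + 1 := by
    by_contra hc
    push_neg at hc
    exact hnon s (t + 1) hc.1 ht1s hc.2 ⟨h2.ne, Or.inl h2⟩
  rcases c1 with c1 | c1 <;> rcases c2 with c2 | c2
  · exact e1 (by linear_combination c2 - c1)
  · exact e1 (by linear_combination c1 - c2)
  · exact e3 (by linear_combination c2 - c1)
  · exact e1 (by linear_combination c2 - c1)

lemma xInj (hk : 5 ≤ k) (hinj : Function.Injective v)
    (hnon : ∀ i j : ZMod k, j ≠ i - 1 → j ≠ i → j ≠ i + 1 → ¬ (square G).Adj (v i) (v j))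
    (hS : ∀ i ∈ S, ¬ G.Adj (v i) (v (i + 1)) ∧ G.Adj (v i) (x i) ∧ G.Adj (x i) (v (i + 1)))
    {t s : ZMod k} (ht : t ∈ S) (hs : s ∈ S) (he : x t = x s) : t = s := by
  have e1 : (1 : ZMod k) ≠ 0 := by exact_mod_cast zmod_nz hk (c := 1) (by norm_num) (by norm_num)
  have e2 : (2 : ZMod k) ≠ 0 := by exact_mod_cast zmod_nz hk (c := 2) (by norm_num) (by norm_num)
  have h1 : G.Adj (x t) (v s) := by rw [he]; exact (hS s hs).2.1.symm
  have h2 : G.Adj (x t) (v (s + 1)) := by rw [he]; exact (hS s hs).2.2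
  rcases xAdjV hk hinj hnon hS ht h1 with r1 | r1
  · exact r1.symm
  · rcases xAdjV hk hinj hnon hS ht h2 with r2 | r2
    · exact absurd (by linear_combination r2 - r1) e2
    · have : s = t := by linear_combination r2
      exact this.symm

end Aux

section Claim1

variable {k : ℕ} {G : SimpleGraph V} {v : ZMod k → V} {S : Set (ZMod k)} {x : ZMod k → V}

lemma aux_claim1 (h6 : _root_.Free G (pathGraph 6)) (hk : 5 ≤ k)
    (hinj : Function.Injective v)
    (hnon : ∀ i j : ZMod k, j ≠ i - 1 → j ≠ i → j ≠ i + 1 → ¬ (square G).Adj (v i) (v j))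
    (hS : ∀ i ∈ S, ¬ G.Adj (v i) (v (i + 1)) ∧ G.Adj (v i) (x i) ∧ G.Adj (x i) (v (i + 1)))
    (i j : ZMod k) (hi : i ∈ S) (hj : j ∈ S)
    (hij1 : j ≠ i - 1) (hij2 : j ≠ i) (hij3 : j ≠ i + 1)
    (hxx : ¬ G.Adj (x i) (x j)) : ¬ G.Adj (v (i + 1)) (v j) := by
  have e1 : (1 : ZMod k) ≠ 0 := by exact_mod_cast zmod_nz hk (c := 1) (by norm_num) (by norm_num)
  have e2 : (2 : ZMod k) ≠ 0 := by exact_mod_cast zmod_nz hk (c := 2) (by norm_num) (by norm_num)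
  have e3 : (3 : ZMod k) ≠ 0 := by exact_mod_cast zmod_nz hk (c := 3) (by norm_num) (by norm_num)
  have e4 : (4 : ZMod k) ≠ 0 := by exact_mod_cast zmod_nz hk (c := 4) (by norm_num) (by norm_num)
  by_cases hcase : j = i + 2
  · intro hadj
    refine no_p6_s11 h6 (v i) (x i) (v (i + 1)) (v j) (x j) (v (j + 1))
      (hS i hi).2.1 (hS i hi).2.2 hadj (hS j hj).2.1 (hS j hj).2.2
      (hS i hi).1
      (nonadjV hnon i j hij1 hij2 hij3)
      ?_ ?_ ?_ hxx ?_ ?_ ?_ (hS j hj).1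
    · -- ¬ Adj (v i) (x j)
      intro h
      rcases xAdjV hk hinj hnon hS hj h.symm with h' | h'
      · exact hij2 h'.symm
      · exact hij1 (by linear_combination -h')
    · -- ¬ Adj (v i) (v (j+1)) , j = i + 2
      refine nonadjV hnon i (j + 1) ?_ ?_ ?_
      · rw [hcase]; intro h'; exact e4 (by linear_combination h')
      · rw [hcase]; intro h'; exact e3 (by linear_combination h')
      · rw [hcase]; intro h'; exact e2 (by linear_combination h')
    · -- ¬ Adj (x i) (v j)
      intro h
      rcases xAdjV hk hinj hnon hS hi h with h' | h'
      · exact hij2 h'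
      · exact hij3 h'
    · -- ¬ Adj (x i) (v (j+1))
      intro h
      rcases xAdjV hk hinj hnon hS hi h with h' | h'
      · exact hij1 (by linear_combination h')
      · exact hij2 (by linear_combination h')
    · -- ¬ Adj (v (i+1)) (x j)
      intro h
      rcases xAdjV hk hinj hnon hS hj h.symm with h' | h'
      · exact hij3 h'.symm
      · exact hij2 (by linear_combination -h')
    · -- ¬ Adj (v (i+1)) (v (j+1))
      refine nonadjV hnon (i + 1) (j + 1) ?_ ?_ ?_
      · intro h'; exact hij1 (by linear_combination h')
      · intro h'; exact hij2 (by linear_combination h')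
      · intro h'; exact hij3 (by linear_combination h')
  · refine nonadjV hnon (i + 1) j ?_ hij3 ?_
    · intro h'; exact hij2 (by linear_combination h')
    · intro h'; exact hcase (by linear_combination h')

end Claim1

section Claim3

variable {k : ℕ} {G : SimpleGraph V} {v : ZMod k → V} {S : Set (ZMod k)} {x : ZMod k → V}

lemma aux_claim3 (h6 : _root_.Free G (pathGraph 6)) (hk : 5 ≤ k)
    (hinj : Function.Injective v)
    (hnon : ∀ i j : ZMod k, j ≠ i - 1 → j ≠ i → j ≠ i + 1 → ¬ (square G).Adj (v i) (v j))
    (hS : ∀ i ∈ S, ¬ G.Adj (v i) (v (i + 1)) ∧ G.Adj (v i) (x i) ∧ G.Adj (x i) (v (i + 1)))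
    (hS' : ∀ i ∉ S, G.Adj (v i) (v (i + 1)))
    (i j : ZMod k) (hi : i ∈ S) (hj : j ∈ S)
    (hij1 : j ≠ i - 1) (hij2 : j ≠ i) (hij3 : j ≠ i + 1)
    (hxx : ¬ G.Adj (x i) (x j)) :
    ∃ r ∈ S, 0 < (r - i).val ∧ (r - i).val < (j - i).val ∧
      G.Adj (x i) (x r) ∧ G.Adj (x j) (x r) := by
  haveI : NeZero k := ⟨by omega⟩
  haveI : Fact (1 < k) := ⟨by omega⟩
  have e1 : (1 : ZMod k) ≠ 0 := by exact_mod_cast zmod_nz hk (c := 1) (by norm_num) (by norm_num)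
  have e2 : (2 : ZMod k) ≠ 0 := by exact_mod_cast zmod_nz hk (c := 2) (by norm_num) (by norm_num)
  have e3 : (3 : ZMod k) ≠ 0 := by exact_mod_cast zmod_nz hk (c := 3) (by norm_num) (by norm_num)
  have e4 : (4 : ZMod k) ≠ 0 := by exact_mod_cast zmod_nz hk (c := 4) (by norm_num) (by norm_num)
  have valinj : ∀ a b : ZMod k, a.val = b.val → a = b := fun a b h => ZMod.val_injective k h
  have vone : (1 : ZMod k).val = 1 := ZMod.val_one k
  have vneg1 : (-1 : ZMod k).val = k - 1 := by
    haveI : NeZero (1 : ZMod k) := ⟨e1⟩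
    rw [ZMod.val_neg_of_ne_zero, vone]
  obtain ⟨d, hd⟩ : ∃ d, (j - i).val = d := ⟨_, rfl⟩
  have hdlt : d < k := by rw [← hd]; exact ZMod.val_lt _
  have hcast : ((d : ℕ) : ZMod k) = j - i := by rw [← hd]; exact ZMod.natCast_zmod_val _
  have hd0 : d ≠ 0 := by
    intro h
    apply hij2
    have h0 : j - i = 0 := (ZMod.val_eq_zero _).mp (by rw [hd, h])
    linear_combination h0
  have hd1 : d ≠ 1 := by
    intro h
    apply hij3
    have h0 : j - i = 1 := by rw [← hcast, h, Nat.cast_one]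
    linear_combination h0
  have hdk1 : d ≠ k - 1 := by
    intro h
    apply hij1
    have hc1 : ((k - 1 : ℕ) : ZMod k) = -1 := by
      rw [Nat.cast_sub (by omega : 1 ≤ k), Nat.cast_one, ZMod.natCast_self]
      ring
    have h0 : j - i = -1 := by rw [← hcast, h, hc1]
    linear_combination h0
  have hd2 : 2 ≤ d := by omega
  have hdm2 : d ≤ k - 2 := by omega
  have hvne : ∀ t : ZMod k, t ≠ j → (t - i).val ≠ d := by
    intro t ht hv
    apply ht
    have h0 : t - i = j - i := valinj _ _ (by rw [hv, hd])
    linear_combination h0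
  have hval_i1 : ((i + 1) - i).val = 1 := by rw [show i + 1 - i = 1 by ring, vone]
  have hval_im1 : ((i - 1) - i).val = k - 1 := by rw [show i - 1 - i = -1 by ring, vneg1]
  have hval_j1 : ((j + 1) - i).val = d + 1 := by
    rw [show j + 1 - i = (j - i) + 1 by ring,
      ZMod.val_add_of_lt (by rw [hd, vone]; omega), hd, vone]
  have hAXj : j ∈ S ∧ 1 ≤ (j - i).val ∧ (j - i).val ≤ d := ⟨hj, by omega, by omega⟩
  have GFA : ∀ t : ZMod k, (t ∈ S ∧ 1 ≤ (t - i).val ∧ (t - i).val ≤ d) →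
      ¬ G.Adj (v i) (x t) := by
    rintro t ⟨ht, hl, hr⟩ h
    rcases xAdjV hk hinj hnon hS ht h.symm with h' | h'
    · rw [← h', sub_self, ZMod.val_zero] at hl; omega
    · have ht' : t = i - 1 := by linear_combination -h'
      rw [ht', hval_im1] at hr; omega
  have GFB : ∀ t : ZMod k, (1 ≤ (t - i).val ∧ (t - i).val ≤ d) → ¬ G.Adj (v i) (v t) := by
    rintro t ⟨hl, hr⟩ h
    by_cases hone : (t - i).val = 1
    · have ht : t = i + 1 := by
        have h0 : t - i = 1 := valinj _ _ (by rw [hone, vone])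
        linear_combination h0
      rw [ht] at h
      exact (hS i hi).1 h
    · refine nonadjV hnon i t ?_ ?_ ?_ h
      · intro he; rw [he, hval_im1] at hr; omega
      · intro he; rw [he, sub_self, ZMod.val_zero] at hl; omega
      · intro he; exact hone (by rw [he, hval_i1])
  have GFC : ∀ t : ZMod k, (1 ≤ (t - i).val ∧ (t - i).val ≤ d) →
      ¬ G.Adj (v (j + 1)) (v t) := by
    rintro t ⟨hl, hr⟩ h
    by_cases htj : t = j
    · rw [htj] at h; exact (hS j hj).1 h.symm
    · refine nonadjV hnon (j + 1) t ?_ ?_ ?_ h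
      · intro he; exact htj (by linear_combination he)
      · intro he; rw [he, hval_j1] at hr; omega
      · intro he
        have h2 : t - i = (j - i) + 1 + 1 := by rw [he]; ring
        by_cases hc : d + 2 < k
        · have v1 : ((j - i) + 1).val = d + 1 := by
            rw [ZMod.val_add_of_lt (by rw [hd, vone]; omega), hd, vone]
          have v2 : ((j - i) + 1 + 1).val = d + 2 := by
            rw [ZMod.val_add_of_lt (by rw [v1, vone]; omega), v1, vone]
          rw [h2, v2] at hr; omega
        · have h0 : (j - i) + 1 + 1 = 0 := by
            have hx1 : (j - i) + 1 + 1 = ((d + 2 : ℕ) : ZMod k) := by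
              rw [← hcast]; push_cast; ring
            rw [hx1, show d + 2 = k by omega, ZMod.natCast_self]
          rw [h2, h0, ZMod.val_zero] at hl; omega
  have GFD : ∀ t : ZMod k, (t ∈ S ∧ 1 ≤ (t - i).val ∧ (t - i).val ≤ d) → t ≠ j →
      ¬ G.Adj (v (j + 1)) (x t) := by
    rintro t ⟨ht, hl, hr⟩ htj h
    rcases xAdjV hk hinj hnon hS ht h.symm with h' | h'
    · rw [← h', hval_j1] at hr; omega
    · exact htj (by linear_combination -h')
  have NXi : ∀ t : ZMod k, (1 ≤ (t - i).val ∧ (t - i).val ≤ d) → G.Adj (x i) (v t) →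
      t = i + 1 := by
    rintro t ⟨hl, hr⟩ h
    rcases xAdjV hk hinj hnon hS hi h with h' | h'
    · rw [h', sub_self, ZMod.val_zero] at hl; omega
    · exact h'
  have NXj : ∀ t : ZMod k, (1 ≤ (t - i).val ∧ (t - i).val ≤ d) → G.Adj (x j) (v t) →
      t = j := by
    rintro t ⟨hl, hr⟩ h
    rcases xAdjV hk hinj hnon hS hj h with h' | h'
    · exact h'
    · rw [h', hval_j1] at hr; omega
  have nxivj : ¬ G.Adj (x i) (v j) := by
    intro h
    rcases xAdjV hk hinj hnon hS hi h with h' | h'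
    · exact hij2 h'
    · exact hij3 h'
  have nxivj1 : ¬ G.Adj (x i) (v (j + 1)) := by
    intro h
    rcases xAdjV hk hinj hnon hS hi h with h' | h'
    · exact hij1 (by linear_combination h')
    · exact hij2 (by linear_combination h')
  have nxjvi : ¬ G.Adj (x j) (v i) := by
    intro h
    rcases xAdjV hk hinj hnon hS hj h with h' | h'
    · exact hij2 h'.symm
    · exact hij1 (by linear_combination -h')
  -- existence of a good walk
  have hij : i + ((d : ℕ) : ZMod k) = j := by rw [hcast]; ring
  have reach : ∀ c : ℕ, 1 ≤ c → c ≤ d →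
      ∃ n, GoodWalk G (Arc v x S i d) (x i) (v (i + (c : ZMod k))) n := by
    intro c
    induction c with
    | zero => intro h1 _; omega
    | succ c ih =>
      intro h1 h2
      rcases Nat.eq_zero_or_pos c with hc0 | hc0
      · subst hc0
        rw [show i + ((0 + 1 : ℕ) : ZMod k) = i + 1 by push_cast; ring]
        refine ⟨1, goodwalk_single (hS i hi).2.2 (Or.inl ⟨i + 1, ⟨?_, ?_⟩, rfl⟩)⟩
        · rw [hval_i1]
        · rw [hval_i1]; omega
      · obtain ⟨n, W⟩ := ih (by omega) (by omega)
        have hcv : ((i + ((c : ℕ) : ZMod k)) - i).val = c := by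
          rw [show (i + ((c : ℕ) : ZMod k)) - i = ((c : ℕ) : ZMod k) by ring]
          exact ZMod.val_cast_of_lt (by omega)
        have hcv1 : ((i + ((c : ℕ) : ZMod k) + 1) - i).val = c + 1 := by
          rw [show (i + ((c : ℕ) : ZMod k) + 1) - i = ((c + 1 : ℕ) : ZMod k) by push_cast; ring]
          exact ZMod.val_cast_of_lt (by omega)
        have hstep : i + ((c + 1 : ℕ) : ZMod k) = (i + ((c : ℕ) : ZMod k)) + 1 := by
          push_cast; ring
        rw [hstep]
        by_cases hm : (i + ((c : ℕ) : ZMod k)) ∈ S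
        · refine ⟨n + 1 + 1, goodwalk_snoc (goodwalk_snoc W (hS _ hm).2.1 ?_) (hS _ hm).2.2 ?_⟩
          · exact Or.inr ⟨_, ⟨hm, by rw [hcv]; omega, by rw [hcv]; omega⟩, rfl⟩
          · exact Or.inl ⟨_, ⟨by rw [hcv1]; omega, by rw [hcv1]; omega⟩, rfl⟩
        · refine ⟨n + 1, goodwalk_snoc W (hS' _ hm) ?_⟩
          exact Or.inl ⟨_, ⟨by rw [hcv1]; omega, by rw [hcv1]; omega⟩, rfl⟩
  have hexw : ∃ n, GoodWalk G (Arc v x S i d) (x i) (x j) n := by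
    obtain ⟨n, W⟩ := reach d (by omega) (le_refl d)
    rw [hij] at W
    exact ⟨n + 1, goodwalk_snoc W (hS j hj).2.1 (Or.inr ⟨j, ⟨hj, by omega, by omega⟩, rfl⟩)⟩
  obtain ⟨N, p, hp0, hpN, hch, hA, hchord, hrep⟩ := goodwalk_min hexw
  have nvp : ∀ a, 0 < a → a ≤ N → ¬ G.Adj (v i) (p a) := by
    intro a h1 h2
    rcases hA a h1 h2 with ⟨t, hT, he⟩ | ⟨t, hT, he⟩
    · rw [he]; exact GFB t hT
    · rw [he]; exact GFA t hT
  have nvj1p : ∀ a, 0 < a → a < N → ¬ G.Adj (p a) (v (j + 1)) := by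
    intro a h1 h2
    rcases hA a h1 (by omega) with ⟨t, hT, he⟩ | ⟨t, hT, he⟩
    · rw [he]; exact fun h => GFC t hT h.symm
    · have htj : t ≠ j := by
        intro hh
        apply hrep a N h2 (le_refl N)
        rw [he, hh, hpN]
      rw [he]; exact fun h => GFD t hT htj h.symm
  have hxij : x i ≠ x j := fun h => hij2 (xInj hk hinj hnon hS hi hj h).symm
  have hN2 : 2 ≤ N := by
    rcases (by omega : 2 ≤ N ∨ N = 0 ∨ N = 1) with h | h | h
    · exact h
    · rw [h] at hpN; rw [hp0] at hpN; exact absurd hpN hxij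
    · have hc := hch 0 (by omega)
      rw [hp0] at hc; rw [h] at hpN; rw [hpN] at hc
      exact absurd hc hxx
  have hN3 : N ≤ 3 := by
    by_contra hgt
    push_neg at hgt
    exact no_p6_s11 h6 (v i) (p 0) (p 1) (p 2) (p 3) (p 4)
      (by rw [hp0]; exact (hS i hi).2.1) (hch 0 (by omega)) (hch 1 (by omega))
      (hch 2 (by omega)) (hch 3 (by omega))
      (nvp 1 (by omega) (by omega)) (nvp 2 (by omega) (by omega))
      (nvp 3 (by omega) (by omega)) (nvp 4 (by omega) (by omega))
      (hchord 0 2 (by omega) (by omega)) (hchord 0 3 (by omega) (by omega))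
      (hchord 0 4 (by omega) (by omega)) (hchord 1 3 (by omega) (by omega))
      (hchord 1 4 (by omega) (by omega)) (hchord 2 4 (by omega) (by omega))
  rcases (by omega : N = 2 ∨ N = 3) with hN | hN
  · -- N = 2 : common neighbor found
    have hxp1 : G.Adj (x i) (p 1) := by rw [← hp0]; exact hch 0 (by omega)
    have hp1xj : G.Adj (p 1) (x j) := by
      have hc := hch 1 (by omega)
      rw [hN] at hpN
      rwa [hpN] at hc
    rcases hA 1 (by omega) (by omega) with ⟨t, hT, he⟩ | ⟨r, hR, he⟩
    · rw [he] at hxp1 hp1xj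
      have e1' := NXi t hT hxp1
      have e2' := NXj t hT hp1xj.symm
      exact absurd (by rw [← e2', e1'] : j = i + 1) hij3
    · rw [he] at hxp1 hp1xj
      have hrj : r ≠ j := by
        intro h
        rw [h] at hp1xj
        exact G.loopless.irrefl _ hp1xj
      refine ⟨r, hR.1, ?_, ?_, hxp1, hp1xj.symm⟩
      · have := hR.2.1; omega
      · rw [hd]
        have h1 := hvne r hrj
        have h2 := hR.2.2
        omega
  · -- N = 3 : impossible
    exfalso
    have hp3 : p 3 = x j := by rw [← hN]; exact hpN
    have hxp1 : G.Adj (x i) (p 1) := by rw [← hp0]; exact hch 0 (by omega)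
    have h12 : G.Adj (p 1) (p 2) := hch 1 (by omega)
    have h2xj : G.Adj (p 2) (x j) := by
      have hc := hch 2 (by omega)
      rwa [hp3] at hc
    have hc02 : ¬ G.Adj (x i) (p 2) := by rw [← hp0]; exact hchord 0 2 (by omega) (by omega)
    have hc13 : ¬ G.Adj (p 1) (x j) := by rw [← hp3]; exact hchord 1 3 (by omega) (by omega)
    have hne13 : p 1 ≠ x j := by rw [← hp3]; exact hrep 1 3 (by omega) (by omega)
    have hne23 : p 2 ≠ x j := h2xj.ne
    by_cases hbad : G.Adj (v i) (v (j + 1))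
    · -- the bad edge forces j = i - 2
      have hji2 : j = i - 2 := by
        by_contra hne
        refine nonadjV hnon i (j + 1) ?_ ?_ ?_ hbad
        · intro h'; exact hne (by linear_combination h')
        · intro h'; exact hij1 (by linear_combination h')
        · intro h'; exact hij2 (by linear_combination h')
      rcases hA 1 (by omega) (by omega) with ⟨t1, hT1, he1⟩ | ⟨r1, ⟨hr1S, hr1l, hr1r⟩, he1⟩
      · -- p 1 = v t1, t1 = i + 1
        have ht1 : t1 = i + 1 := NXi t1 hT1 (by rwa [he1] at hxp1)
        rcases hA 2 (by omega) (by omega) with ⟨t2, hT2, he2⟩ | ⟨r2, ⟨hr2S, hr2l, hr2r⟩, he2⟩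
        · -- p 2 = v t2 = v j : contradicts claim 1
          have ht2 : t2 = j := NXj t2 hT2 (by rw [he2] at h2xj; exact h2xj.symm)
          rw [he1, he2, ht1, ht2] at h12
          exact aux_claim1 h6 hk hinj hnon hS i j hi hj hij1 hij2 hij3 hxx h12
        · -- p 2 = x r2, r2 = i + 1
          have h1r2 : G.Adj (v (i + 1)) (x r2) := by
            rw [he1, he2, ht1] at h12; exact h12
          have hr2 : r2 = i + 1 := by
            rcases xAdjV hk hinj hnon hS hr2S h1r2.symm with h' | h'
            · exact h'.symm
            · exfalso
              have hri : r2 = i := by linear_combination -h'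
              rw [hri, sub_self, ZMod.val_zero] at hr2l
              omega
          subst hr2
          rw [he2] at h2xj hc02
          refine no_p6_s11 h6 (v i) (x i) (v (i + 1)) (x (i + 1)) (x j) (v j)
            (hS i hi).2.1 (hS i hi).2.2 h1r2 h2xj (hS j hj).2.1.symm
            (hS i hi).1 ?_ (GFA j hAXj) (nonadjV hnon i j hij1 hij2 hij3)
            hc02 hxx nxivj ?_
            (aux_claim1 h6 hk hinj hnon hS i j hi hj hij1 hij2 hij3 hxx) ?_
          · exact GFA (i + 1) ⟨hr2S, by rw [hval_i1], by rw [hval_i1]; omega⟩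
          · -- ¬ Adj (v (i+1)) (x j)
            intro h
            rcases xAdjV hk hinj hnon hS hj h.symm with h' | h'
            · exact hij3 h'.symm
            · exact hij2 (by linear_combination -h')
          · -- ¬ Adj (x (i+1)) (v j)
            intro h
            rcases xAdjV hk hinj hnon hS hr2S h with h' | h'
            · exact hij3 h'
            · -- j = i + 2 but j = i - 2
              rw [hji2] at h'
              exact e4 (by linear_combination -h')
      · -- p 1 = x r1
        have hr1j : r1 ≠ j := fun h => hne13 (by rw [he1, h])
        have hr1d : (r1 - i).val < d := by have := hvne r1 hr1j; omega
        have hxir1 : G.Adj (x i) (x r1) := by rwa [he1] at hxp1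
        by_cases hr1c : r1 = j - 1
        · -- P6 : v (j-1), x (j-1), x i, v i, v (j+1), x j
          subst hr1c
          have hj1n : ¬ G.Adj (x (j - 1)) (x j) := by rw [← he1]; exact hc13
          refine no_p6_s11 h6 (v (j - 1)) (x (j - 1)) (x i) (v i) (v (j + 1)) (x j)
            (hS _ hr1S).2.1 hxir1.symm (hS i hi).2.1.symm hbad (hS j hj).2.2.symm
            ?_ ?_ ?_ ?_ ?_ ?_ hj1n nxivj1 hxx (fun h => nxjvi h.symm)
          · -- ¬ Adj (v (j-1)) (x i)
            intro h
            rcases xAdjV hk hinj hnon hS hi h.symm with h' | h'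
            · exact hij3 (by linear_combination h')
            · rw [hji2] at h'
              exact e4 (by linear_combination -h')
          · -- ¬ Adj (v (j-1)) (v i)
            refine nonadjV hnon (j - 1) i ?_ ?_ ?_
            · intro h'
              rw [hji2] at h'
              exact e4 (by linear_combination h')
            · intro h'; exact hij3 (by linear_combination -h')
            · intro h'; exact hij2 (by linear_combination -h')
          · -- ¬ Adj (v (j-1)) (v (j+1))
            refine nonadjV hnon (j - 1) (j + 1) ?_ ?_ ?_
            · intro h'; exact e3 (by linear_combination h')
            · intro h'; exact e2 (by linear_combination h')
            · intro h'; exact e1 (by linear_combination h')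
          · -- ¬ Adj (v (j-1)) (x j)
            intro h
            rcases xAdjV hk hinj hnon hS hj h.symm with h' | h'
            · exact e1 (by linear_combination -h')
            · exact e2 (by linear_combination -h')
          · -- ¬ Adj (x (j-1)) (v i)
            intro h
            rcases xAdjV hk hinj hnon hS hr1S h with h' | h'
            · exact hij3 (by linear_combination -h')
            · exact hij2 (by linear_combination -h')
          · -- ¬ Adj (x (j-1)) (v (j+1))
            intro h
            rcases xAdjV hk hinj hnon hS hr1S h with h' | h'
            · exact e2 (by linear_combination h')
            · exact e1 (by linear_combination h')
        · rcases hA 2 (by omega) (by omega) with ⟨t2, hT2, he2⟩ | ⟨r2, ⟨hr2S, hr2l, hr2r⟩, he2⟩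
          · -- p 2 = v t2 = v j forces r1 = j - 1 : contradiction
            have ht2 : t2 = j := NXj t2 hT2 (by rw [he2] at h2xj; exact h2xj.symm)
            have hadj : G.Adj (x r1) (v j) := by rw [he1, he2, ht2] at h12; exact h12
            rcases xAdjV hk hinj hnon hS hr1S hadj with h' | h'
            · exact hr1j h'.symm
            · exact hr1c (by linear_combination -h')
          · have hr2j : r2 ≠ j := fun h => hne23 (by rw [he2, h])
            have hr2d : (r2 - i).val < d := by have := hvne r2 hr2j; omega
            have h12' : G.Adj (x r1) (x r2) := by rw [he1, he2] at h12; exact h12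
            have h2j' : G.Adj (x r2) (x j) := by rw [he2] at h2xj; exact h2xj
            have hn02' : ¬ G.Adj (x i) (x r2) := by rw [← he2]; exact hc02
            have hn13' : ¬ G.Adj (x r1) (x j) := by rw [← he1]; exact hc13
            by_cases hr2c : r2 = j - 1
            · -- P6 : v j, x (j-1), x r1, x i, v i, v (j+1)
              subst hr2c
              have ha01 : G.Adj (v j) (x (j - 1)) := by
                have hh := (hS _ hr2S).2.2
                rw [show j - 1 + 1 = j by ring] at hh
                exact hh.symm
              refine no_p6_s11 h6 (v j) (x (j - 1)) (x r1) (x i) (v i) (v (j + 1))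
                ha01 h12'.symm hxir1.symm (hS i hi).2.1.symm hbad
                ?_ (fun h => nxivj h.symm) (fun h => nonadjV hnon i j hij1 hij2 hij3 h.symm)
                (hS j hj).1 (fun h => hn02' h.symm) ?_ ?_
                (fun h => GFA r1 ⟨hr1S, hr1l, hr1r⟩ h.symm)
                (fun h => GFD r1 ⟨hr1S, hr1l, hr1r⟩ hr1j h.symm) nxivj1
              · -- ¬ Adj (v j) (x r1)
                intro h
                rcases xAdjV hk hinj hnon hS hr1S h.symm with h' | h'
                · exact hr1j h'.symm
                · exact hr1c (by linear_combination -h')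
              · -- ¬ Adj (x (j-1)) (v i)
                intro h
                rcases xAdjV hk hinj hnon hS hr2S h with h' | h'
                · exact hij3 (by linear_combination -h')
                · exact hij2 (by linear_combination -h')
              · -- ¬ Adj (x (j-1)) (v (j+1))
                intro h
                rcases xAdjV hk hinj hnon hS hr2S h with h' | h'
                · exact e2 (by linear_combination h')
                · exact e1 (by linear_combination h')
            · -- P6 : v i, x i, x r1, x r2, x j, v j
              refine no_p6_s11 h6 (v i) (x i) (x r1) (x r2) (x j) (v j)
                (hS i hi).2.1 hxir1 h12' h2j' (hS j hj).2.1.symm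
                (GFA r1 ⟨hr1S, hr1l, hr1r⟩) (GFA r2 ⟨hr2S, hr2l, hr2r⟩) (GFA j hAXj)
                (nonadjV hnon i j hij1 hij2 hij3) hn02' hxx nxivj hn13' ?_ ?_
              · -- ¬ Adj (x r1) (v j)
                intro h
                rcases xAdjV hk hinj hnon hS hr1S h with h' | h'
                · exact hr1j h'.symm
                · exact hr1c (by linear_combination -h')
              · -- ¬ Adj (x r2) (v j)
                intro h
                rcases xAdjV hk hinj hnon hS hr2S h with h' | h'
                · exact hr2j h'.symm
                · exact hr2c (by linear_combination -h')
    · -- no bad edge : P6 : v i, p 0, p 1, p 2, p 3, v (j+1)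
      exact no_p6_s11 h6 (v i) (p 0) (p 1) (p 2) (p 3) (v (j + 1))
        (by rw [hp0]; exact (hS i hi).2.1) (hch 0 (by omega)) (hch 1 (by omega))
        (hch 2 (by omega)) (by rw [hp3]; exact (hS j hj).2.2)
        (nvp 1 (by omega) (by omega)) (nvp 2 (by omega) (by omega))
        (nvp 3 (by omega) (by omega)) hbad
        (hchord 0 2 (by omega) (by omega)) (hchord 0 3 (by omega) (by omega))
        (by rw [hp0]; exact nxivj1) (hchord 1 3 (by omega) (by omega))
        (nvj1p 1 (by omega) (by omega)) (nvj1p 2 (by omega) (by omega))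

end Claim3

theorem stmt11 (G : SimpleGraph V) (h6 : _root_.Free G (pathGraph 6))
    (k : ℕ) (hk : 5 ≤ k) (v : ZMod k → V) (hinj : Function.Injective v)
    (hadj : ∀ i : ZMod k, (square G).Adj (v i) (v (i + 1)))
    (hnon : ∀ i j : ZMod k, j ≠ i - 1 → j ≠ i → j ≠ i + 1 → ¬ (square G).Adj (v i) (v j))
    (S : Set (ZMod k)) (x : ZMod k → V)
    (hS : ∀ i ∈ S, ¬ G.Adj (v i) (v (i + 1)) ∧ G.Adj (v i) (x i) ∧ G.Adj (x i) (v (i + 1)))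
    (hS' : ∀ i ∉ S, G.Adj (v i) (v (i + 1)))
    (i j : ZMod k) (hi : i ∈ S) (hj : j ∈ S)
    (hij1 : j ≠ i - 1) (hij2 : j ≠ i) (hij3 : j ≠ i + 1)
    (hxx : ¬ G.Adj (x i) (x j)) :
    ¬ G.Adj (v (i + 1)) (v j) ∧ ¬ G.Adj (v (j + 1)) (v i) ∧
      (∃ r ∈ S, 0 < (r - i).val ∧ (r - i).val < (j - i).val ∧
        G.Adj (x i) (x r) ∧ G.Adj (x j) (x r)) ∧
      (∃ s ∈ S, (j - i).val < (s - i).val ∧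
        G.Adj (x i) (x s) ∧ G.Adj (x j) (x s)) := by
  have hxx' : ¬ G.Adj (x j) (x i) := fun h => hxx h.symm
  have hji1 : i ≠ j - 1 := fun h => hij3 (by linear_combination -h)
  have hji2 : i ≠ j := fun h => hij2 h.symm
  have hji3 : i ≠ j + 1 := fun h => hij1 (by linear_combination -h)
  refine ⟨aux_claim1 h6 hk hinj hnon hS i j hi hj hij1 hij2 hij3 hxx,
    aux_claim1 h6 hk hinj hnon hS j i hj hi hji1 hji2 hji3 hxx',
    aux_claim3 h6 hk hinj hnon hS hS' i j hi hj hij1 hij2 hij3 hxx, ?_⟩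
  obtain ⟨s, hsS, hs1, hs2, hxs1, hxs2⟩ :=
    aux_claim3 h6 hk hinj hnon hS hS' j i hj hi hji1 hji2 hji3 hxx'
  refine ⟨s, hsS, ?_, hxs2, hxs1⟩
  refine zmod_val_gt hk (j - i) (s - i) (sub_ne_zero.mpr hij2) ?_ ?_
  · rw [show s - i - (j - i) = s - j by ring]; exact hs1
  · rw [show s - i - (j - i) = s - j by ring, show -(j - i) = i - j by ring]; exact hs2
end
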